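/- arXiv:2410.04894 — 3 statements merged into one kernel-verified Lean document; each statement's English description precedes it below -/
import Mathlib

section
/- Let σ ∈ ℂ∖{0}, a ∈ ℂ with Re a > 0, and z ∈ ℂ∖{0} with |arg(σz)| < π. Then for every integer N ≥ 0, F⁽¹⁾(z;a;σ) = Σ_{n=0}^{N−1} Γ(a+n)·exp((a+n)(iπ − Log σ))·z^{−n−1} + z^{−N} F⁽¹⁾(z;a+N;σ), where Log denotes the principal logarithm and Γ is the Gamma function. (Exact finite expansion of the first hyperterminant with self-similar remainder; the terms exhibit the factorial-over-power divergence typical of asymptotic series with a Borel transform.) -/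
open MeasureTheory Set Filter

open scoped Classical

noncomputable section

/-- `e^{iθ}`. -/
def eI (θ : ℝ) : ℂ := Complex.exp (θ * Complex.I)

/-- First hyperterminant ray integral along the ray of direction `e^{iθ}`. -/
def F1ray (θ : ℝ) (z a σ : ℂ) : ℂ :=
  eI θ * ∫ t in Ioi (0:ℝ),
    Complex.exp (σ * t * eI θ) * (t : ℂ) ^ (a - 1) *
      Complex.exp ((a - 1) * (θ * Complex.I)) * (z - t * eI θ)⁻¹

/-- First hyperterminant `F⁽¹⁾(z;a;σ)` with its principal ray `θ = π - arg σ`. -/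
def F1 (z a σ : ℂ) : ℂ := F1ray (Real.pi - σ.arg) z a σ

/-- Second hyperterminant double ray integral, outer ray `e^{iθ₀}`, inner ray `e^{iθ₁}`. -/
def F2ray (θ0 θ1 : ℝ) (z N0 σ0 N1 σ1 : ℂ) : ℂ :=
  eI θ0 * eI θ1 * ∫ t0 in Ioi (0:ℝ), ∫ t1 in Ioi (0:ℝ),
    Complex.exp (σ0 * t0 * eI θ0 + σ1 * t1 * eI θ1) *
      ((t0 : ℂ) ^ N0 * Complex.exp (N0 * (θ0 * Complex.I))) *
      ((t1 : ℂ) ^ N1 * Complex.exp (N1 * (θ1 * Complex.I))) *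
      ((z - t0 * eI θ0) * (t0 * eI θ0 - t1 * eI θ1))⁻¹

/-- Second hyperterminant `F⁽²⁾(z;N₀+1,σ₀;N₁+1,σ₁)` with both principal rays. -/
def F2 (z N0 σ0 N1 σ1 : ℂ) : ℂ :=
  F2ray (Real.pi - σ0.arg) (Real.pi - σ1.arg) z N0 σ0 N1 σ1

/-- Winding index of the marked argument `ψ` of `σz` relative to the Stokes rays
`ψ = (2m-1)π`. -/
def wind (ψ : ℝ) : ℤ :=
  if 0 ≤ ψ then ⌈(ψ - Real.pi) / (2 * Real.pi)⌉ else -⌈(-ψ - Real.pi) / (2 * Real.pi)⌉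

/-- `ψ` lies on a Stokes ray `ψ = (2m-1)π`. -/
def isStokes (ψ : ℝ) : Prop := ∃ m : ℤ, ψ = (2 * m - 1) * Real.pi

/-- Analytic continuation of the first hyperterminant `F⁽¹⁾(z;a;σ)` to the point
`z = r e^{iφ}` carrying the marked argument `φ`: on `|arg(σz)| < π` it is the
principal ray integral; each upward crossing of a Stokes ray `arg(σz) = (2m-1)π`
adds the residue `2πi e^{σz} |z|^{a-1} e^{i(a-1)·arg z}`; on a Stokes ray it is the
limit from the side of the principal sector. -/
def F1m (a σ : ℂ) (r φ : ℝ) : ℂ :=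
  let ψ := σ.arg + φ
  let res : ℂ := 2 * Real.pi * Complex.I * Complex.exp (σ * ((r : ℂ) * eI φ)) *
      (r : ℂ) ^ (a - 1) * Complex.exp ((a - 1) * (φ * Complex.I))
  if isStokes ψ then
    (if 0 ≤ ψ then limUnder (nhdsWithin φ (Iio φ)) (fun χ => F1 ((r : ℂ) * eI χ) a σ)
     else limUnder (nhdsWithin φ (Ioi φ)) (fun χ => F1 ((r : ℂ) * eI χ) a σ)) + (wind ψ : ℂ) * res
  else F1 ((r : ℂ) * eI φ) a σ + (wind ψ : ℂ) * res

/-- Second hyperterminant extended to `η = arg σ₁ - arg σ₀ ∈ (-π, 0]`: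
for `η < 0` one subtracts `2πi F⁽¹⁾`-type term, for `η = 0` it is the limit
`F⁽²⁾(z;N₀+1,σ₀e^{-iε};N₁+1,σ₁)` as `ε → 0⁺`. -/
def F2ext (z N0 σ0 N1 σ1 : ℂ) : ℂ :=
  if σ0.arg < σ1.arg then F2 z N0 σ0 N1 σ1
  else if σ1.arg = σ0.arg then
    limUnder (nhdsWithin (0:ℝ) (Ioi 0)) (fun ε => F2 z N0 (σ0 * eI (-ε)) N1 σ1)
  else if σ0.arg - σ1.arg < Real.pi then
    F2 z N0 σ0 N1 σ1 -
      2 * Real.pi * Complex.I * F1ray (Real.pi - σ0.arg) z (N0 + N1 + 1) (σ0 + σ1)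
  else F2 z N0 σ0 N1 σ1

/-- Second hyperterminant at `z = r e^{iφ}` carrying the marked argument `φ`,
continued across the Stokes ray `arg(σ₀z) = π` by adding
`2πi e^{σ₀z} |z|^{N₀} e^{iN₀ arg z} F⁽¹⁾(z;N₁+1;σ₁)`, with the value on the ray
taken as the limit from below. -/
def F2m (N0 σ0 N1 σ1 : ℂ) (r φ : ℝ) : ℂ :=
  let ψ := σ0.arg + φ
  if ψ < Real.pi then F2ext ((r : ℂ) * eI φ) N0 σ0 N1 σ1
  else if ψ = Real.pi then
    limUnder (nhdsWithin φ (Iio φ)) (fun χ => F2ext ((r : ℂ) * eI χ) N0 σ0 N1 σ1)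
  else
    F2ext ((r : ℂ) * eI φ) N0 σ0 N1 σ1 +
      2 * Real.pi * Complex.I * Complex.exp (σ0 * ((r : ℂ) * eI φ)) *
        (r : ℂ) ^ N0 * Complex.exp (N0 * (φ * Complex.I)) * F1m (N1 + 1) σ1 r φ

/-- Complementary error function on `ℂ`: `erfc w = (2/√π) ∫₀^∞ e^{-(w+t)²} dt`. -/
def cerfc (w : ℂ) : ℂ :=
  (2 : ℂ) / (Real.sqrt Real.pi : ℂ) * ∫ t in Ioi (0:ℝ), Complex.exp (-(w + t) ^ 2)

/-- Error function `erf w = 1 - erfc w`. -/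
def cerf (w : ℂ) : ℂ := 1 - cerfc w

/-- The new smoothing special function
`erfc(x;y;λ) = (2/√π) ∫₀^∞ e^{-(x+s-y)²} erfc(λ(x+s)) ds`. -/
def cerfc3 (x y lam : ℂ) : ℂ :=
  (2 : ℂ) / (Real.sqrt Real.pi : ℂ) *
    ∫ s in Ioi (0:ℝ), Complex.exp (-(x + s - y) ^ 2) * cerfc (lam * (x + s))

/-- `I(β) = ∫₀^∞ s^{N₁} (1+s)^{-N₀-N₁-1} (s-β)⁻¹ ds`. -/
def Ifun (N0 N1 β : ℂ) : ℂ :=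
  ∫ s in Ioi (0:ℝ), (s : ℂ) ^ N1 * ((1 : ℂ) + s) ^ (-N0 - N1 - 1) * ((s : ℂ) - β)⁻¹

/-- `Ĩ(β)`: equals `I(β)` for `arg β ∈ (0,π]`, the limit of `I(βe^{iθ})` as `θ → 0⁺`
for `β ∈ (0,∞)`, and `I(β) + 2πi β^{N₁}(1+β)^{-N₀-N₁-1}` for `arg β ∈ (-π,0)`. -/
def Itilde (N0 N1 β : ℂ) : ℂ :=
  if 0 < β.arg then Ifun N0 N1 β
  else if β.arg = 0 then limUnder (nhdsWithin (0:ℝ) (Ioi 0)) (fun θ => Ifun N0 N1 (β * eI θ))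
  else Ifun N0 N1 β + 2 * Real.pi * Complex.I * β ^ N1 * (1 + β) ^ (-N0 - N1 - 1)

/-- The sector `|arg(-σz/N)| < 2π` in the logarithmic coordinate `w = log z`
(so `z = e^w` with marked argument `Im w`). -/
def alphaSector (σ N : ℂ) : Set ℂ :=
  {w : ℂ | |σ.arg + w.im - N.arg - Real.pi| < 2 * Real.pi}

/-- The logarithmic coordinate of the centre `z = -N/σ` (marked so that
`arg(-σz/N) = 0`). -/
def wcenter (σ N : ℂ) : ℂ :=
  (Real.log (‖N‖ / ‖σ‖) : ℂ) + (Real.pi + N.arg - σ.arg) * Complex.I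

/-- The continuous branch of `log(-σz/N)` vanishing at `z = -N/σ`, in the
logarithmic coordinate `w = log z`. -/
def ellC (σ N : ℂ) (w : ℂ) : ℂ :=
  w + (Real.log (‖σ‖ / ‖N‖) : ℂ) + (σ.arg - N.arg - Real.pi) * Complex.I

/-- `A` is the function `α_{σ,N}` (in the logarithmic coordinate `w = log z`):
analytic on the sector, `(1/2)α² = 1 + σz/N + ℓ(z)`, `α(-N/σ) = 0` and
`α'(-N/σ) = -iσ/N`, i.e. `dA/dw = i` at the centre. -/
def IsAlpha (σ N : ℂ) (A : ℂ → ℂ) : Prop :=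
  DifferentiableOn ℂ A (alphaSector σ N) ∧
  (∀ w ∈ alphaSector σ N, (A w) ^ 2 = 2 * (1 + σ * Complex.exp w / N + ellC σ N w)) ∧
  A (wcenter σ N) = 0 ∧ HasDerivAt A Complex.I (wcenter σ N)

/-- `g_{σ,N}(z) = i(1+σz/N)⁻¹ - α_{σ,N}(z)⁻¹`, extended by its analytic value
`i/3` at the centre `z = -N/σ`; logarithmic coordinate `w = log z`. -/
def gfun (σ N : ℂ) (A : ℂ → ℂ) (w : ℂ) : ℂ :=
  if w = wcenter σ N then Complex.I / 3
  else Complex.I / (1 + σ * Complex.exp w / N) - (A w)⁻¹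

/-- Logarithmic coordinate of the marked point `z = r e^{iφ}`. -/
def wpt (r φ : ℝ) : ℂ := (Real.log r : ℂ) + φ * Complex.I

/-- Principal square root. -/
def sqrtC (w : ℂ) : ℂ := w ^ ((1 : ℂ) / 2)

/-- Principal branch of the complex arctangent. -/
def arctanC (z : ℂ) : ℂ :=
  Complex.I / 2 * (Complex.log (1 - Complex.I * z) - Complex.log (1 + Complex.I * z))

/-- Logarithmic coordinate of `ζ₁ = -N₁/σ₁` with marked argument
`arg(σ₀ζ₁) = π + arg(σ₀N₁/(σ₁N₀))`. -/
def wzeta (σ0 σ1 N0 N1 : ℂ) : ℂ :=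
  (Real.log (‖N1‖ / ‖σ1‖) : ℂ) +
    (Real.pi + (σ0 * N1 / (σ1 * N0)).arg - σ0.arg) * Complex.I

/-- `d₁ = i α₀(ζ₁)/(1 - σ₀N₁/(σ₁N₀))`, extended by `1` when `σ₀N₁ = σ₁N₀`. -/
def d1c (σ0 σ1 N0 N1 : ℂ) (A0 : ℂ → ℂ) : ℂ :=
  if σ0 * N1 = σ1 * N0 then 1
  else Complex.I * A0 (wzeta σ0 σ1 N0 N1) / (1 - σ0 * N1 / (σ1 * N0))

/-- `G` is the function `γ` of Theorem `hypergeom` for `s* = N₁/N₀`: analytic on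
`|arg β| < π` with `(1/2)γ(β)² = (1+1/s*) log((1+s*)/(1+β)) - log(s*/β)`,
`γ(s*) = 0` and `γ(s*e^{iν}) ∼ ν (1+s*)^{-1/2}` as `ν → 0`. -/
def IsGamma (N0 N1 : ℂ) (G : ℂ → ℂ) : Prop :=
  DifferentiableOn ℂ G {β : ℂ | β ≠ 0 ∧ |β.arg| < Real.pi} ∧
  (∀ β ∈ {β : ℂ | β ≠ 0 ∧ |β.arg| < Real.pi},
    (G β) ^ 2 =
      2 * ((1 + N0 / N1) * Complex.log ((1 + N1 / N0) / (1 + β)) -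
        Complex.log (N1 / N0 / β))) ∧
  G (N1 / N0) = 0 ∧
  HasDerivAt G ((1 + N1 / N0) ^ (-(1 : ℂ) / 2) / (Complex.I * (N1 / N0))) (N1 / N0)

/-- `g(0,β) = (1+s*)^{-1/2}(1-β/s*)⁻¹ - i((1+β)γ(β))⁻¹`, with its removable
singularity at `β = s* = N₁/N₀` filled in. -/
def gzero (N0 N1 : ℂ) (G : ℂ → ℂ) (β : ℂ) : ℂ :=
  if β = N1 / N0 then (1 - N1 / N0) / (3 * (1 + N1 / N0) ^ ((3 : ℂ) / 2))
  else (1 + N1 / N0) ^ (-(1 : ℂ) / 2) * (1 - β / (N1 / N0))⁻¹ -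
    Complex.I / ((1 + β) * G β)

/-- The coefficients `bₙ(y,λ)` of the large-`x` asymptotic expansion of
`erfc(x;y;λ)`: `b₀ = b₁ = 0` (`b₋₁ = 0`), `b₂ = 1/(πλ(λ²+1))` and
`4λ²(λ²+1) b_{m+2} = 4yλ² b_{m+1} - 2((2m-1)(λ²+1) - m) b_m + 2y(m-1) b_{m-1}
- (m-1)(m-2) b_{m-2}` for `m ≥ 1`. -/
def bc (y l : ℂ) : ℕ → ℂ
  | 0 => 0
  | 1 => 0
  | 2 => 1 / (Real.pi * l * (l ^ 2 + 1))
  | 3 =>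
      (4 * y * l ^ 2 * bc y l 2 - 2 * ((2 * 1 - 1) * (l ^ 2 + 1) - 1) * bc y l 1 +
          2 * y * (1 - 1 : ℂ) * bc y l 0 - (1 - 1 : ℂ) * (1 - 2 : ℂ) * 0) /
        (4 * l ^ 2 * (l ^ 2 + 1))
  | (n + 4) =>
      (4 * y * l ^ 2 * bc y l (n + 3) -
          2 * ((2 * ((n : ℂ) + 2) - 1) * (l ^ 2 + 1) - ((n : ℂ) + 2)) * bc y l (n + 2) +
          2 * y * ((n : ℂ) + 1) * bc y l (n + 1) -
          ((n : ℂ) + 1) * (n : ℂ) * bc y l n) /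
        (4 * l ^ 2 * (l ^ 2 + 1))

/-- The slit sector `{z ≠ 0 : |arg(σz)| < π}`. -/
def sector1 (σ : ℂ) : Set ℂ := {z : ℂ | z ≠ 0 ∧ |(σ * z).arg| < Real.pi}

/-- The `erfc(x;y;λ)`-term appearing in the uniform higher-order Stokes smoothing. -/
def X9 (σ0 σ1 N0 N1 : ℂ) (A0 : ℂ → ℂ) (r φ : ℝ) : ℂ :=
  cerfc3 (d1c σ0 σ1 N0 N1 A0 * A0 (wpt r φ) * sqrtC (N1 / 2))
    (d1c σ0 σ1 N0 N1 A0 * A0 (wzeta σ0 σ1 N0 N1) * sqrtC (N1 / 2))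
    ((d1c σ0 σ1 N0 N1 A0)⁻¹ * sqrtC (N0 / N1))

namespace Stmt0Aux

open Complex MeasureTheory Set

lemma abs_eI (θ : ℝ) : ‖eI θ‖ = 1 := by
  simp [eI, Complex.norm_exp]

lemma sigma_eI (σ : ℂ) :
    σ * eI (Real.pi - σ.arg) = -(‖σ‖ : ℂ) := by
  conv_lhs => rw [eI]; arg 1; rw [← Complex.norm_mul_exp_arg_mul_I σ]
  push_cast
  rw [sub_mul, Complex.exp_sub, Complex.exp_pi_mul_I]
  have h : Complex.exp (σ.arg * Complex.I) ≠ 0 := Complex.exp_ne_zero _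
  field_simp

lemma lower_bound (σ z : ℂ) (hσ : σ ≠ 0) (hz : z ≠ 0)
    (harg : |(σ * z).arg| < Real.pi) :
    ∃ d, 0 < d ∧ ∀ t : ℝ, 0 ≤ t → d ≤ ‖z - t * eI (Real.pi - σ.arg)‖ := by
  set θ := Real.pi - σ.arg with hθ
  have heI : eI θ ≠ 0 := Complex.exp_ne_zero _
  set w := z * (eI θ)⁻¹ with hw
  have hkey : ∀ t : ℝ, ‖z - t * eI θ‖ = ‖w - t‖ := by
    intro t
    have h1 : z - t * eI θ = (w - t) * eI θ := by rw [hw]; field_simp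
    rw [h1, norm_mul, abs_eI, mul_one]
  have hnot : ¬ (w.im = 0 ∧ 0 ≤ w.re) := by
    rintro ⟨h1, h2⟩
    have hwz : w = (w.re : ℂ) := by
      apply Complex.ext
      · simp
      · simp [h1]
    have hz' : z = (w.re : ℂ) * eI θ := by
      rw [← hwz, hw]; field_simp
    have hσz : σ * z = ((-(‖σ‖ * w.re) : ℝ) : ℂ) := by
      have h3 : σ * z = (w.re : ℂ) * (σ * eI θ) := by rw [hz']; ring
      rw [h3, sigma_eI σ]; push_cast; ring
    rcases eq_or_lt_of_le h2 with h4 | h4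
    · apply hz
      rw [hz', ← h4]; simp
    · have h5 : (-(‖σ‖ * w.re) : ℝ) < 0 := by
        have : 0 < ‖σ‖ := norm_pos_iff.mpr hσ
        nlinarith
      rw [hσz, Complex.arg_ofReal_of_neg h5] at harg
      rw [abs_of_pos Real.pi_pos] at harg
      exact lt_irrefl _ harg
  by_cases him : w.im = 0
  · have hre : w.re < 0 := by
      by_contra h
      exact hnot ⟨him, not_lt.mp h⟩
    refine ⟨-w.re, by linarith, fun t ht => ?_⟩
    rw [hkey]
    calc -w.re ≤ |(w - (t : ℂ)).re| := by
          have : (w - (t : ℂ)).re = w.re - t := by simp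
          rw [this, abs_of_nonpos (by linarith)]
          linarith
      _ ≤ ‖w - t‖ := Complex.abs_re_le_norm _
  · refine ⟨|w.im|, abs_pos.mpr him, fun t ht => ?_⟩
    rw [hkey]
    calc |w.im| = |(w - (t : ℂ)).im| := by simp
      _ ≤ ‖w - t‖ := Complex.abs_im_le_norm _

lemma cont_cpow (b : ℂ) : ContinuousOn (fun t : ℝ => (t : ℂ) ^ b) (Ioi (0:ℝ)) := by
  apply continuousOn_of_forall_continuousAt
  intro x hx
  have h : ContinuousAt (fun y : ℂ => y ^ b) (x : ℂ) :=
    continuousAt_cpow_const <| Complex.ofReal_mem_slitPlane.2 hx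
  exact h.comp Complex.continuous_ofReal.continuousAt

lemma exp_eq (σ : ℂ) (t : ℝ) :
    Complex.exp (σ * t * eI (Real.pi - σ.arg)) =
      Complex.exp (-((‖σ‖ : ℝ) * t : ℝ)) := by
  congr 1
  rw [show σ * (t:ℂ) * eI (Real.pi - σ.arg) = (t:ℂ) * (σ * eI (Real.pi - σ.arg)) by ring,
    sigma_eI σ]
  push_cast; ring

lemma scaled_integrable {s c : ℝ} (hs : 0 < s) (hc : 0 < c) :
    IntegrableOn (fun x : ℝ => Real.exp (-(c * x)) * x ^ (s - 1)) (Ioi 0) := by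
  have base : IntegrableOn (fun x : ℝ => Real.exp (-x) * x ^ (s - 1)) (Ioi 0) :=
    Real.GammaIntegral_convergent hs
  have scaled0 : IntegrableOn (fun x : ℝ => Real.exp (-(c * x)) * (c * x) ^ (s - 1)) (Ioi 0) := by
    have h := (integrableOn_Ioi_comp_mul_left_iff
      (fun x : ℝ => Real.exp (-x) * x ^ (s - 1)) 0 hc).mpr
    rw [mul_zero] at h
    exact h base
  have h2 := scaled0.const_mul (c ^ (1 - s))
  apply MeasureTheory.IntegrableOn.congr_fun h2 ?_ measurableSet_Ioi
  intro x hx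
  rw [mem_Ioi] at hx
  have hcc : c ^ (1 - s) * c ^ (s - 1) = 1 := by
    rw [← Real.rpow_add hc]; norm_num
  calc c ^ (1 - s) * (Real.exp (-(c * x)) * (c * x) ^ (s - 1))
      = c ^ (1 - s) * (Real.exp (-(c * x)) * (c ^ (s - 1) * x ^ (s - 1))) := by
        rw [Real.mul_rpow hc.le hx.le]
    _ = (c ^ (1 - s) * c ^ (s - 1)) * (Real.exp (-(c * x)) * x ^ (s - 1)) := by ring
    _ = Real.exp (-(c * x)) * x ^ (s - 1) := by rw [hcc, one_mul]

lemma g_integrable (σ a : ℂ) (hσ : σ ≠ 0) (ha : 0 < a.re) :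
    IntegrableOn (fun t : ℝ =>
      Complex.exp (σ * t * eI (Real.pi - σ.arg)) * (t : ℂ) ^ (a - 1)) (Ioi 0) := by
  set c := ‖σ‖ with hcdef
  have hc : 0 < c := by rw [hcdef]; exact norm_pos_iff.mpr hσ
  have meas : AEStronglyMeasurable (fun t : ℝ =>
      Complex.exp (σ * t * eI (Real.pi - σ.arg)) * (t : ℂ) ^ (a - 1))
      (volume.restrict (Ioi 0)) := by
    apply ContinuousOn.aestronglyMeasurable ?_ measurableSet_Ioi
    exact (Complex.continuous_exp.comp (by continuity)).continuousOn.mul (cont_cpow (a - 1))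
  apply Integrable.mono' (scaled_integrable ha hc) meas
  apply (ae_restrict_iff' measurableSet_Ioi).mpr
  filter_upwards with t ht
  rw [mem_Ioi] at ht
  rw [norm_mul, exp_eq σ t, Complex.norm_exp,
    Complex.norm_cpow_eq_rpow_re_of_pos ht]
  simp [Complex.sub_re, hcdef]

lemma f_integrable (σ a z : ℂ) (hσ : σ ≠ 0) (ha : 0 < a.re) (hz : z ≠ 0)
    (harg : |(σ * z).arg| < Real.pi) :
    IntegrableOn (fun t : ℝ =>
      Complex.exp (σ * t * eI (Real.pi - σ.arg)) * (t : ℂ) ^ (a - 1) *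
        Complex.exp ((a - 1) * ((Real.pi - σ.arg : ℝ) * Complex.I)) *
        (z - t * eI (Real.pi - σ.arg))⁻¹) (Ioi 0) := by
  obtain ⟨d, hd0, hd⟩ := lower_bound σ z hσ hz harg
  set θ := Real.pi - σ.arg with hθ
  set c := ‖σ‖ with hcdef
  have hc : 0 < c := by rw [hcdef]; exact norm_pos_iff.mpr hσ
  set K := ‖Complex.exp ((a - 1) * ((θ : ℝ) * Complex.I))‖ with hK
  have hne : ∀ t : ℝ, 0 < t → z - t * eI θ ≠ 0 := by
    intro t ht h
    have := hd t ht.le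
    rw [h] at this
    simp at this
    linarith
  have meas : AEStronglyMeasurable (fun t : ℝ =>
      Complex.exp (σ * t * eI θ) * (t : ℂ) ^ (a - 1) *
        Complex.exp ((a - 1) * ((θ : ℝ) * Complex.I)) * (z - t * eI θ)⁻¹)
      (volume.restrict (Ioi 0)) := by
    apply ContinuousOn.aestronglyMeasurable ?_ measurableSet_Ioi
    apply ContinuousOn.mul
    · apply ContinuousOn.mul
      · exact ((Complex.continuous_exp.comp (by continuity)).continuousOn.mul
          (cont_cpow (a - 1)))
      · exact continuousOn_const
    · apply ContinuousOn.inv₀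
      · exact (continuous_const.sub
          (Complex.continuous_ofReal.mul continuous_const)).continuousOn
      · intro t ht
        exact hne t ht
  apply Integrable.mono' ((scaled_integrable ha hc).const_mul (K * d⁻¹)) meas
  apply (ae_restrict_iff' measurableSet_Ioi).mpr
  filter_upwards with t ht
  rw [mem_Ioi] at ht
  calc ‖Complex.exp (σ * t * eI θ) * (t : ℂ) ^ (a - 1) *
        Complex.exp ((a - 1) * ((θ : ℝ) * Complex.I)) * (z - t * eI θ)⁻¹‖
      = Real.exp (-(c * t)) * t ^ (a.re - 1) * K * (‖z - t * eI θ‖)⁻¹ := by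
        rw [norm_mul, norm_mul, norm_mul, norm_inv]
        rw [exp_eq σ t, Complex.norm_exp, Complex.norm_cpow_eq_rpow_re_of_pos ht]
        simp [Complex.sub_re, hcdef, hK]
    _ ≤ Real.exp (-(c * t)) * t ^ (a.re - 1) * K * d⁻¹ := by
        gcongr
        exact hd t ht.le
    _ = K * d⁻¹ * (Real.exp (-(c * t)) * t ^ (a.re - 1)) := by ring

lemma gamma_int (σ a : ℂ) (hσ : σ ≠ 0) (ha : 0 < a.re) :
    ∫ t in Ioi (0:ℝ), Complex.exp (σ * t * eI (Real.pi - σ.arg)) * (t : ℂ) ^ (a - 1)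
      = (1 / (‖σ‖ : ℂ)) ^ a * Complex.Gamma a := by
  have hc : 0 < ‖σ‖ := norm_pos_iff.mpr hσ
  rw [← Complex.integral_cpow_mul_exp_neg_mul_Ioi ha hc]
  apply setIntegral_congr_fun measurableSet_Ioi
  intro t ht
  simp only [exp_eq σ]
  push_cast
  ring

lemma const_eq (σ a : ℂ) (hσ : σ ≠ 0) :
    Complex.exp (a * (Real.pi * Complex.I - Complex.log σ)) =
      Complex.exp (((Real.pi - σ.arg : ℝ) : ℂ) * Complex.I) *
        Complex.exp ((a - 1) * (((Real.pi - σ.arg : ℝ) : ℂ) * Complex.I)) *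
        (1 / (‖σ‖ : ℂ)) ^ a := by
  have hc : (0:ℝ) < ‖σ‖ := norm_pos_iff.mpr hσ
  have h1 : (1 / (‖σ‖ : ℂ)) = (((‖σ‖)⁻¹ : ℝ) : ℂ) := by push_cast; ring
  rw [h1, Complex.cpow_def_of_ne_zero (by
    simp only [ne_eq, Complex.ofReal_eq_zero, inv_eq_zero]
    exact hc.ne'),
    ← Complex.ofReal_log (by positivity), Real.log_inv]
  rw [← Complex.exp_add, ← Complex.exp_add,
    show Complex.log σ = (↑(Real.log (‖σ‖)) + ↑σ.arg * Complex.I) from rfl]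
  congr 1
  push_cast
  ring

lemma step (σ a z : ℂ) (hσ : σ ≠ 0) (ha : 0 < a.re) (hz : z ≠ 0)
    (harg : |(σ * z).arg| < Real.pi) :
    F1 z a σ = Complex.Gamma a *
        Complex.exp (a * (Real.pi * Complex.I - Complex.log σ)) * z⁻¹
      + z⁻¹ * F1 z (a + 1) σ := by
  obtain ⟨d, hd0, hd⟩ := lower_bound σ z hσ hz harg
  set θ := Real.pi - σ.arg with hθ
  have hne : ∀ t : ℝ, 0 < t → z - t * eI θ ≠ 0 := by
    intro t ht h
    have := hd t ht.le
    rw [h] at this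
    simp at this
    linarith
  set E : ℂ := Complex.exp ((a - 1) * ((θ : ℝ) * Complex.I)) with hE
  have ha1 : 0 < (a + 1).re := by
    simp only [Complex.add_re, Complex.one_re]; linarith
  have hsplit : ∀ t ∈ Ioi (0:ℝ),
      Complex.exp (σ * t * eI θ) * (t : ℂ) ^ (a - 1) * E * (z - t * eI θ)⁻¹ =
        (Complex.exp (σ * t * eI θ) * (t : ℂ) ^ (a - 1)) * (E * z⁻¹) +
        z⁻¹ * (Complex.exp (σ * t * eI θ) * (t : ℂ) ^ (a + 1 - 1) *
          Complex.exp ((a + 1 - 1) * ((θ : ℝ) * Complex.I)) * (z - t * eI θ)⁻¹) := by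
    intro t ht
    rw [mem_Ioi] at ht
    have htne : (t : ℂ) ≠ 0 := by exact_mod_cast ht.ne'
    have h1 : (t : ℂ) ^ (a + 1 - 1) = (t : ℂ) ^ (a - 1) * t := by
      rw [show a + 1 - 1 = (a - 1) + 1 by ring, Complex.cpow_add _ _ htne, Complex.cpow_one]
    have h2 : Complex.exp ((a + 1 - 1) * ((θ : ℝ) * Complex.I)) =
        E * Complex.exp ((θ : ℝ) * Complex.I) := by
      rw [hE, ← Complex.exp_add]
      congr 1
      ring
    rw [h1, h2]
    have hzu := hne t ht
    have heIθ : eI θ = Complex.exp ((θ : ℝ) * Complex.I) := rfl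
    rw [← heIθ]
    field_simp
    ring
  have hI1 : IntegrableOn (fun t : ℝ =>
      (Complex.exp (σ * t * eI θ) * (t : ℂ) ^ (a - 1)) * (E * z⁻¹)) (Ioi 0) :=
    (g_integrable σ a hσ ha).mul_const _
  have hI2 : IntegrableOn (fun t : ℝ =>
      z⁻¹ * (Complex.exp (σ * t * eI θ) * (t : ℂ) ^ (a + 1 - 1) *
        Complex.exp ((a + 1 - 1) * ((θ : ℝ) * Complex.I)) * (z - t * eI θ)⁻¹)) (Ioi 0) := by
    have := (f_integrable σ (a + 1) z hσ ha1 hz harg).const_mul z⁻¹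
    exact this
  have hmain : F1 z a σ = eI θ * ∫ t in Ioi (0:ℝ),
      ((Complex.exp (σ * t * eI θ) * (t : ℂ) ^ (a - 1)) * (E * z⁻¹) +
        z⁻¹ * (Complex.exp (σ * t * eI θ) * (t : ℂ) ^ (a + 1 - 1) *
          Complex.exp ((a + 1 - 1) * ((θ : ℝ) * Complex.I)) * (z - t * eI θ)⁻¹)) := by
    rw [F1, F1ray]
    congr 1
    exact setIntegral_congr_fun measurableSet_Ioi hsplit
  rw [hmain, integral_add hI1 hI2, integral_mul_const, integral_const_mul,
    gamma_int σ a hσ ha]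
  rw [show F1 z (a + 1) σ = eI θ * ∫ t in Ioi (0:ℝ),
      Complex.exp (σ * t * eI θ) * (t : ℂ) ^ (a + 1 - 1) *
        Complex.exp ((a + 1 - 1) * ((θ : ℝ) * Complex.I)) * (z - t * eI θ)⁻¹ from rfl]
  rw [const_eq σ a hσ]
  have heIθ : eI θ = Complex.exp (((θ : ℝ) : ℂ) * Complex.I) := rfl
  rw [hE, heIθ]
  ring

end Stmt0Aux


theorem stmt0 (σ a z : ℂ) (hσ : σ ≠ 0) (ha : 0 < a.re) (hz : z ≠ 0)
    (harg : |(σ * z).arg| < Real.pi) (N : ℕ) :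
    F1 z a σ =
      (∑ n ∈ Finset.range N,
        Complex.Gamma (a + n) *
          Complex.exp ((a + n) * (Real.pi * Complex.I - Complex.log σ)) *
          z ^ (-(n : ℤ) - 1)) +
        z ^ (-(N : ℤ)) * F1 z (a + N) σ := by
  induction N with
  | zero => simp
  | succ N ih =>
    have hre : 0 < (a + (N : ℂ)).re := by
      simp only [Complex.add_re, Complex.natCast_re]
      positivity
    rw [Finset.sum_range_succ, ih, Stmt0Aux.step σ (a + N) z hσ hre hz harg]
    push_cast
    rw [show a + ((N : ℂ) + 1) = a + (N : ℂ) + 1 by ring,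
      show (-((N : ℤ) + 1)) = -(N : ℤ) - 1 by ring, zpow_sub_one₀ hz]
    ring
end
end

section
/- For all x, y ∈ ℂ: erfc(x; y; 0) = erfc(x − y) and erfc(x; 0; 1) = (1/2)·erfc(x)²; and for every λ ∈ ℝ: erfc(0; 0; λ) = 1 − (2/π)·arctan λ. (Special values of the new smoothing special function; the last identity gives the higher-order Stokes multiplier at the crossing point.) -/
open MeasureTheory Set Filter

open scoped Classical

noncomputable section

open Topology

namespace S16

def c : ℂ := (2 : ℂ) / (Real.sqrt Real.pi : ℂ)

lemma sqrtpi_ne : ((Real.sqrt Real.pi : ℝ) : ℂ) ≠ 0 := by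
  exact_mod_cast Complex.ofReal_ne_zero.2 (Real.sqrt_ne_zero'.2 Real.pi_pos)

def g (x : ℂ) (u : ℝ) : ℂ := Complex.exp (-(x + u) ^ 2)

lemma g_cont (x : ℂ) : Continuous (g x) := by
  unfold g; fun_prop

lemma norm_g (x : ℂ) (u : ℝ) :
    ‖g x u‖ = Real.exp (x.im ^ 2) * Real.exp (-(u + x.re) ^ 2) := by
  rw [g, Complex.norm_exp, ← Real.exp_add]
  congr 1
  simp [pow_two, Complex.mul_re, Complex.add_re, Complex.add_im]
  ring

lemma g_integrable (x : ℂ) : Integrable (g x) := by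
  have h1 : Integrable (fun u : ℝ => Real.exp (-1 * u ^ 2)) :=
    integrable_exp_neg_mul_sq one_pos
  have h2 : Integrable (fun u : ℝ => Real.exp (-1 * (u + x.re) ^ 2)) :=
    h1.comp_add_right x.re
  refine Integrable.mono' ((h2.const_mul (Real.exp (x.im ^ 2))))
    (g_cont x).aestronglyMeasurable (Filter.Eventually.of_forall fun u => ?_)
  rw [norm_g]
  simp [neg_one_mul]

def E (x : ℂ) (s : ℝ) : ℂ := ∫ u in Ioi s, g x u

lemma shift (x : ℂ) (s : ℝ) : (∫ t in Ioi (0:ℝ), g x (s + t)) = E x s := by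
  have hmp : MeasurePreserving (fun t : ℝ => t + s) volume volume :=
    measurePreserving_add_right volume s
  have hme : MeasurableEmbedding (fun t : ℝ => t + s) :=
    (Homeomorph.addRight s).measurableEmbedding
  have := hmp.setIntegral_image_emb hme (g x) (Ioi (0:ℝ))
  rw [Set.image_add_const_Ioi, zero_add] at this
  rw [E, this]
  exact setIntegral_congr_fun measurableSet_Ioi (fun t _ => by rw [add_comm])

lemma E_sub (x : ℂ) (s : ℝ) : E x s = E x 0 - ∫ u in (0:ℝ)..s, g x u := by
  rcases le_total 0 s with h | h
  · rw [intervalIntegral.integral_of_le h, eq_sub_iff_add_eq, add_comm, E, E,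
      ← setIntegral_union (Ioc_disjoint_Ioi le_rfl) measurableSet_Ioi
        ((g_integrable x).integrableOn) ((g_integrable x).integrableOn),
      Ioc_union_Ioi_eq_Ioi h]
  · rw [intervalIntegral.integral_symm, intervalIntegral.integral_of_le h, sub_neg_eq_add,
      eq_comm, add_comm, E, E,
      ← setIntegral_union (Ioc_disjoint_Ioi le_rfl) measurableSet_Ioi
        ((g_integrable x).integrableOn) ((g_integrable x).integrableOn),
      Ioc_union_Ioi_eq_Ioi h]

lemma E_hasDerivAt (x : ℂ) (s : ℝ) : HasDerivAt (E x) (-(g x s)) s := by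
  have h : HasDerivAt (fun s => ∫ u in (0:ℝ)..s, g x u) (g x s) s :=
    intervalIntegral.integral_hasDerivAt_right ((g_integrable x).intervalIntegrable)
      ((g_cont x).stronglyMeasurable.stronglyMeasurableAtFilter) (g_cont x).continuousAt
  have := h.const_sub (E x 0)
  refine HasDerivAt.congr_of_eventuallyEq this ?_
  filter_upwards with t using (E_sub x t)

lemma E_cont (x : ℂ) : Continuous (E x) :=
  continuous_iff_continuousAt.2 fun s => (E_hasDerivAt x s).continuousAt

lemma E_tendsto (x : ℂ) : Tendsto (E x) atTop (𝓝 0) := by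
  have h : Tendsto (fun s : ℝ => ∫ u in (0:ℝ)..s, g x u) atTop (𝓝 (E x 0)) :=
    intervalIntegral_tendsto_integral_Ioi 0 ((g_integrable x).integrableOn) tendsto_id
  have h2 : Tendsto (fun s : ℝ => E x 0 - ∫ u in (0:ℝ)..s, g x u) atTop (𝓝 (E x 0 - E x 0)) :=
    tendsto_const_nhds.sub h
  rw [sub_self] at h2
  exact h2.congr fun s => (E_sub x s).symm

lemma E_bound (x : ℂ) (s : ℝ) : ‖E x s‖ ≤ ∫ u, ‖g x u‖ :=
  calc ‖E x s‖ ≤ ∫ u in Ioi s, ‖g x u‖ := norm_integral_le_integral_norm _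
  _ ≤ ∫ u, ‖g x u‖ := setIntegral_le_integral (g_integrable x).norm
      (Filter.Eventually.of_forall fun u => norm_nonneg _)

lemma cerfc_eqE (w : ℂ) : cerfc w = c * E w 0 := rfl

lemma E_add (x : ℂ) (s : ℝ) : E (x + s) 0 = E x s := by
  rw [← shift x s, E]
  refine setIntegral_congr_fun measurableSet_Ioi (fun t _ => ?_)
  rw [g, g]
  push_cast
  ring_nf

lemma cerfc_add (x : ℂ) (s : ℝ) : cerfc (x + s) = c * E x s := by
  rw [cerfc_eqE, E_add]

lemma E00 : E 0 0 = ((Real.sqrt Real.pi / 2 : ℝ) : ℂ) := by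
  have h : ∀ u : ℝ, g 0 u = ((Real.exp (-1 * u ^ 2) : ℝ) : ℂ) := by
    intro u
    rw [g, Complex.ofReal_exp]
    congr 1
    push_cast
    ring
  rw [E]
  simp_rw [h]
  rw [show (∫ u in Ioi (0:ℝ), ((Real.exp (-1 * u ^ 2) : ℝ) : ℂ))
      = ((∫ u in Ioi (0:ℝ), Real.exp (-1 * u ^ 2) : ℝ) : ℂ) from integral_ofReal,
    integral_gaussian_Ioi]
  norm_num

lemma cerfc_zero : cerfc 0 = 1 := by
  rw [cerfc_eqE, E00, c]
  have := sqrtpi_ne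
  push_cast
  field_simp

lemma part1 (x y : ℂ) : cerfc3 x y 0 = cerfc (x - y) := by
  rw [cerfc3, cerfc_eqE]
  have h : ∀ s : ℝ, Complex.exp (-(x + s - y) ^ 2) * cerfc (0 * (x + s)) = g (x - y) s := by
    intro s
    rw [zero_mul, cerfc_zero, mul_one, g]
    ring_nf
  simp_rw [h]
  rfl

lemma part2 (x : ℂ) : cerfc3 x 0 1 = (1 / 2 : ℂ) * (cerfc x) ^ 2 := by
  set B : ℝ := ∫ u, ‖g x u‖ with hB
  have hBnn : 0 ≤ B := integral_nonneg fun u => norm_nonneg _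
  have hderiv : ∀ s ∈ Ici (0:ℝ), HasDerivAt (fun s => E x s * E x s)
      (2 * E x s * -(g x s)) s := by
    intro s _
    have h : HasDerivAt (fun s => E x s * E x s) _ s := (E_hasDerivAt x s).mul (E_hasDerivAt x s)
    convert h using 1
    ring
  have hint : IntegrableOn (fun s => 2 * E x s * -(g x s)) (Ioi (0:ℝ)) := by
    refine Integrable.mono' (((g_integrable x).norm.const_mul (2 * B)).integrableOn)
      (((continuous_const.mul (E_cont x)).mul (g_cont x).neg).aestronglyMeasurable.restrict)
      (Filter.Eventually.of_forall fun s => ?_)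
    calc ‖2 * E x s * -(g x s)‖ = 2 * (‖E x s‖ * ‖g x s‖) := by
          rw [norm_mul, norm_mul, norm_neg, Complex.norm_ofNat]; ring
      _ ≤ 2 * (B * ‖g x s‖) := by
          have hle := E_bound x s
          rw [← hB] at hle
          gcongr
      _ = 2 * B * ‖g x s‖ := by ring
  have htend : Tendsto (fun s => E x s * E x s) atTop (𝓝 0) := by
    simpa using (E_tendsto x).mul (E_tendsto x)
  have key := integral_Ioi_of_hasDerivAt_of_tendsto' hderiv hint htend
  simp only [zero_sub] at key
  have key2 : ∫ s in Ioi (0:ℝ), E x s * g x s = E x 0 * E x 0 / 2 := by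
    have h : ∀ s : ℝ, 2 * E x s * -(g x s) = (-2 : ℂ) * (E x s * g x s) := fun s => by ring
    simp_rw [h, integral_const_mul] at key
    have h2 : (-2 : ℂ) ≠ 0 := by norm_num
    field_simp at key ⊢
    linear_combination -key
  have hcongr : ∀ s : ℝ, Complex.exp (-(x + s - 0) ^ 2) * cerfc (1 * (x + s))
      = c * (E x s * g x s) := by
    intro s
    rw [sub_zero, one_mul, cerfc_add, g]
    ring
  rw [cerfc3]
  simp_rw [hcongr]
  rw [integral_const_mul, key2, cerfc_eqE]
  show c * (c * (E x 0 * E x 0 / 2)) = 1 / 2 * (c * E x 0) ^ 2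
  ring

def K (t : ℝ) : ℂ := ∫ s in Ioi (0:ℝ), E 0 (t * s) * g 0 s

lemma norm_g0 (u : ℝ) : ‖g 0 u‖ = Real.exp (-u ^ 2) := by
  rw [norm_g]; simp

lemma gg (t s : ℝ) : g 0 (t * s) * g 0 s
    = Complex.exp (-(((1 + t ^ 2 : ℝ)) : ℂ) * (s : ℂ) ^ 2) := by
  rw [g, g, ← Complex.exp_add]
  congr 1
  push_cast
  ring

lemma K_hasDerivAt (t : ℝ) :
    HasDerivAt K (-(2 * (((1 + t ^ 2 : ℝ)) : ℂ))⁻¹) t := by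
  set B : ℝ := ∫ u, ‖g 0 u‖ with hB
  have hmeasF : ∀ r : ℝ, AEStronglyMeasurable (fun s : ℝ => E 0 (r * s) * g 0 s)
      (volume.restrict (Ioi 0)) := fun r =>
    (((E_cont 0).comp (continuous_const.mul continuous_id)).mul (g_cont 0)).aestronglyMeasurable.restrict
  have hF_int : Integrable (fun s : ℝ => E 0 (t * s) * g 0 s) (volume.restrict (Ioi 0)) := by
    refine Integrable.mono' (((g_integrable 0).norm.const_mul B).integrableOn)
      (hmeasF t) (Filter.Eventually.of_forall fun s => ?_)
    rw [norm_mul]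
    have hle := E_bound 0 (t * s)
    rw [← hB] at hle
    gcongr
  have h_diff : ∀ s : ℝ, ∀ r ∈ Metric.ball t 1,
      HasDerivAt (fun r : ℝ => E 0 (r * s) * g 0 s)
        ((s • -(g 0 (r * s))) * g 0 s) r := by
    intro s r _
    exact ((E_hasDerivAt 0 (r * s)).scomp r (hasDerivAt_mul_const s)).mul_const (g 0 s)
  have h_bound : ∀ s : ℝ, ∀ r ∈ Metric.ball t 1,
      ‖(s • -(g 0 (r * s))) * g 0 s‖ ≤ |s * Real.exp (-1 * s ^ 2)| := by
    intro s r _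
    rw [norm_mul, norm_smul, norm_neg, norm_g0, norm_g0, abs_mul, Real.abs_exp,
      Real.norm_eq_abs, neg_one_mul]
    have h1 : Real.exp (-(r * s) ^ 2) ≤ 1 := Real.exp_le_one_iff.2 (neg_nonpos.2 (sq_nonneg _))
    calc |s| * Real.exp (-(r * s) ^ 2) * Real.exp (-s ^ 2)
        ≤ |s| * 1 * Real.exp (-s ^ 2) := by gcongr
      _ = |s| * Real.exp (-s ^ 2) := by ring
  have hres := hasDerivAt_integral_of_dominated_loc_of_deriv_le
    (F := fun r s => E 0 (r * s) * g 0 s)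
    (F' := fun r s => (s • -(g 0 (r * s))) * g 0 s)
    (bound := fun s => |s * Real.exp (-1 * s ^ 2)|)
    (μ := volume.restrict (Ioi 0)) (x₀ := t) (Metric.ball_mem_nhds t one_pos)
    (Filter.Eventually.of_forall hmeasF) hF_int
    ((continuous_id.smul (((g_cont 0).comp (continuous_const.mul continuous_id)).neg)).mul
      (g_cont 0)).aestronglyMeasurable.restrict
    (Filter.Eventually.of_forall h_bound)
    ((integrable_mul_exp_neg_mul_sq one_pos).abs.integrableOn)
    (Filter.Eventually.of_forall h_diff)
  have hval : (∫ s in Ioi (0:ℝ), (s • -(g 0 (t * s))) * g 0 s)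
      = -(2 * (((1 + t ^ 2 : ℝ)) : ℂ))⁻¹ := by
    have h : ∀ s : ℝ, (s • -(g 0 (t * s))) * g 0 s
        = -((s : ℂ) * Complex.exp (-(((1 + t ^ 2 : ℝ)) : ℂ) * (s : ℂ) ^ 2)) := by
      intro s
      rw [← gg t s]
      simp [Complex.real_smul]
      ring
    simp_rw [h]
    rw [integral_neg, integral_mul_cexp_neg_mul_sq (by rw [Complex.ofReal_re]; positivity)]
  rw [hval] at hres
  exact hres.2.congr_deriv rfl

lemma K_eq (t : ℝ) : K t = ((Real.pi / 4 : ℝ) : ℂ) - (1 / 2 : ℂ) * (Real.arctan t : ℂ) := by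
  have hPhi : ∀ r : ℝ, HasDerivAt (fun r : ℝ => K r + (1 / 2 : ℂ) * (Real.arctan r : ℂ)) 0 r := by
    intro r
    have h1 := K_hasDerivAt r
    have h2 := ((Real.hasDerivAt_arctan r).ofReal_comp).const_mul (1 / 2 : ℂ)
    have h3 : HasDerivAt (fun r : ℝ => K r + (1 / 2 : ℂ) * (Real.arctan r : ℂ)) _ r := h1.add h2
    convert h3 using 1
    have hne : ((1 + r ^ 2 : ℝ) : ℂ) ≠ 0 := by
      exact_mod_cast Complex.ofReal_ne_zero.2 (by positivity)
    push_cast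
    field_simp
    ring
  have hconst : ∀ r : ℝ, (fun r : ℝ => K r + (1 / 2 : ℂ) * (Real.arctan r : ℂ)) r
      = (fun r : ℝ => K r + (1 / 2 : ℂ) * (Real.arctan r : ℂ)) 0 := by
    intro r
    exact is_const_of_deriv_eq_zero (fun z => (hPhi z).differentiableAt)
      (fun z => (hPhi z).deriv) r 0
  have hK0 : K 0 = ((Real.pi / 4 : ℝ) : ℂ) := by
    rw [K]
    have h : ∀ s : ℝ, E 0 ((0:ℝ) * s) * g 0 s = E 0 0 * g 0 s := by
      intro s; rw [zero_mul]
    simp_rw [h]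
    rw [integral_const_mul]
    have : (∫ s in Ioi (0:ℝ), g 0 s) = E 0 0 := rfl
    rw [this, E00, ← Complex.ofReal_mul, div_mul_div_comm,
      Real.mul_self_sqrt Real.pi_pos.le]
    norm_num
  have := hconst t
  simp only [Real.arctan_zero, Complex.ofReal_zero, mul_zero, add_zero, hK0] at this
  rw [eq_sub_iff_add_eq, this]

lemma part3 (lam : ℝ) : cerfc3 0 0 (lam : ℂ)
    = (1 : ℂ) - 2 / (Real.pi : ℂ) * (Real.arctan lam : ℂ) := by
  have hcongr : ∀ s : ℝ, Complex.exp (-((0:ℂ) + s - 0) ^ 2) * cerfc ((lam : ℂ) * (0 + s))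
      = c * (E 0 (lam * s) * g 0 s) := by
    intro s
    have h1 : ((lam : ℂ)) * ((0:ℂ) + s) = (0 : ℂ) + ((lam * s : ℝ) : ℂ) := by push_cast; ring
    rw [h1, cerfc_add]
    have h2 : Complex.exp (-((0:ℂ) + s - 0) ^ 2) = g 0 s := by rw [g]; ring_nf
    rw [h2]
    ring
  have hpi : ((Real.pi : ℝ) : ℂ) ≠ 0 :=
    Complex.ofReal_ne_zero.2 Real.pi_ne_zero
  rw [cerfc3]
  simp_rw [hcongr]
  rw [integral_const_mul]
  have : (∫ s in Ioi (0:ℝ), E 0 (lam * s) * g 0 s) = K lam := rfl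
  rw [this, K_eq]
  have hs : ((Real.sqrt Real.pi : ℝ) : ℂ) * ((Real.sqrt Real.pi : ℝ) : ℂ) = (Real.pi : ℂ) := by
    rw [← Complex.ofReal_mul, Real.mul_self_sqrt Real.pi_pos.le]
  have h4 : c * c = 4 / (Real.pi : ℂ) := by
    rw [c, div_mul_div_comm, hs]
    norm_num
  set a : ℂ := ((Real.arctan lam : ℝ) : ℂ) with ha
  calc c * (c * (((Real.pi / 4 : ℝ) : ℂ) - (1 / 2 : ℂ) * a))
      = c * c * (((Real.pi / 4 : ℝ) : ℂ) - (1 / 2 : ℂ) * a) := by ring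
    _ = 4 / (Real.pi : ℂ) * ((Real.pi : ℂ) / 4 - (1 / 2 : ℂ) * a) := by
        rw [h4, Complex.ofReal_div]
        norm_num
    _ = 1 - 2 / (Real.pi : ℂ) * a := by
        field_simp
        ring

end S16

theorem stmt16 :
    (∀ x y : ℂ, cerfc3 x y 0 = cerfc (x - y)) ∧
    (∀ x : ℂ, cerfc3 x 0 1 = (1 / 2 : ℂ) * (cerfc x) ^ 2) ∧
    (∀ lam : ℝ, cerfc3 0 0 (lam : ℂ) =
      (1 : ℂ) - 2 / (Real.pi : ℂ) * (Real.arctan lam : ℂ)) :=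
  ⟨S16.part1, S16.part2, S16.part3⟩
end
end

section
/- For all x, y ∈ ℂ and all λ ∈ ℂ with Re(λ²) > −1: erfc(−x; y; λ) = erfc(x; −y; λ) + 2·erfc(λy/√(λ²+1)) − 2·erfc(x+y), and erfc(x; y; −λ) = −erfc(x; y; λ) + 2·erfc(x−y), where √(λ²+1) denotes the principal square root. (Reflection formulas for the new smoothing special function.) -/
open MeasureTheory Set Filter

open scoped Classical

noncomputable section

local notation "cexp" => Complex.exp

-- sqrt pi facts
lemma sqrtpi_pos : (0:ℝ) < Real.sqrt Real.pi := Real.sqrt_pos.2 Real.pi_pos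
lemma sqrtpi_ne : ((Real.sqrt Real.pi : ℝ) : ℂ) ≠ 0 := by
  exact_mod_cast (ne_of_gt sqrtpi_pos)
lemma sqrtpi_sq : ((Real.sqrt Real.pi : ℝ) : ℂ) ^ 2 = (Real.pi : ℂ) := by
  rw [← Complex.ofReal_pow, Real.sq_sqrt Real.pi_pos.le]

-- quadratic real part lower bound
lemma re_quad_lower (u c : ℂ) {t : ℝ} (ht : 0 ≤ t) :
    u.re * t^2 - 2*‖u‖*‖c‖*t - ‖u‖*‖c‖^2 ≤ (u * (c + t)^2).re := by
  have h : u * (c + t)^2 = (t:ℂ)^2 * u + (t:ℂ) * (2 * u * c) + u * c^2 := by ring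
  rw [h]
  have h1 : ((t:ℂ)^2 * u).re = t^2 * u.re := by
    rw [← Complex.ofReal_pow, Complex.re_ofReal_mul]
  have h2 : ((t:ℂ) * (2*u*c)).re = t * (2*u*c).re := Complex.re_ofReal_mul _ _
  have h3 : -(2*‖u‖*‖c‖) ≤ (2*u*c).re := by
    have := Complex.abs_re_le_norm (2*u*c)
    have h4 : ‖2*u*c‖ = 2*‖u‖*‖c‖ := by
      simp [map_mul]
    rw [abs_le] at this; nlinarith [this.1]
  have h5 : -(‖u‖*‖c‖^2) ≤ (u * c^2).re := by
    have := Complex.abs_re_le_norm (u*c^2)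
    have h4 : ‖u*c^2‖ = ‖u‖*‖c‖^2 := by
      simp [map_mul, map_pow]
    rw [abs_le] at this; nlinarith [this.1]
  simp only [Complex.add_re, h1, h2]
  nlinarith [mul_le_mul_of_nonneg_left h3 ht]


-- helper: integrability of (a+|s|) * exp(-β s² + γ s + δ)
lemma integrable_linear_gauss {β : ℝ} (hβ : 0 < β) (a γ δ : ℝ) :
    Integrable (fun s : ℝ => (a + |s|) * Real.exp (-β*s^2 + γ*s + δ)) := by
  have habs : Integrable (fun u : ℝ => |u| * Real.exp (-β*u^2)) := by
    have := (integrable_mul_exp_neg_mul_sq hβ).abs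
    apply this.congr
    filter_upwards with u
    rw [abs_mul, abs_of_pos (Real.exp_pos _)]
  have key : ∀ c : ℝ, Integrable (fun s : ℝ => (a + |s|) * Real.exp (-β*(s-c)^2)) := by
    intro c
    have hi : Integrable (fun u : ℝ => (a + |u + c|) * Real.exp (-β*u^2)) := by
      apply Integrable.mono'
        (g := fun u => ((|a| + |c|) * Real.exp (-β*u^2) + |u| * Real.exp (-β*u^2)))
      · exact ((integrable_exp_neg_mul_sq hβ).const_mul _).add habs
      · apply Continuous.aestronglyMeasurable; fun_prop
      · filter_upwards with u
        rw [Real.norm_eq_abs, abs_mul, abs_of_pos (Real.exp_pos _)]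
        have h1 : abs (a + abs (u + c)) ≤ abs a + abs c + abs u := by
          have h0 : abs (a + abs (u+c)) ≤ abs a + abs (u+c) := by
            refine (abs_add_le _ _).trans ?_
            rw [abs_abs]
          have h2 : abs (u+c) ≤ abs u + abs c := abs_add_le u c
          linarith
        nlinarith [Real.exp_pos (-β*u^2), h1]
    have := hi.comp_sub_right c
    apply this.congr
    filter_upwards with s
    simp
  have hc : -β*(γ/(2*β))^2 + γ*(γ/(2*β)) = γ^2/(4*β) := by field_simp; ring
  have heq : ∀ s : ℝ, (a + |s|) * Real.exp (-β*(s-γ/(2*β))^2) * Real.exp (δ + γ^2/(4*β))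
      = (a + |s|) * Real.exp (-β*s^2 + γ*s + δ) := by
    intro s
    rw [mul_assoc, ← Real.exp_add]
    congr 2
    field_simp
    ring
  have := (key (γ/(2*β))).mul_const (Real.exp (δ + γ^2/(4*β)))
  exact this.congr (by filter_upwards with s; exact heq s)

lemma tendsto_gauss_zero {β : ℝ} (hβ : 0 < β) (γ δ : ℝ) :
    Tendsto (fun s : ℝ => Real.exp (-β*s^2 + γ*s + δ)) atTop (nhds 0) := by
  apply Real.tendsto_exp_atBot.comp
  have h : (fun s:ℝ => -β*s^2+γ*s+δ) =
      fun s => -(β*(s + -(γ/(2*β)))^2) + (δ + γ^2/(4*β)) := by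
    funext s; field_simp; ring
  rw [h]
  apply Filter.tendsto_atBot_add_const_right
  have h2 : Tendsto (fun s:ℝ => β*(s + -(γ/(2*β)))^2) atTop atTop := by
    apply Tendsto.const_mul_atTop hβ
    exact (tendsto_pow_atTop two_ne_zero).comp (tendsto_atTop_add_const_right _ _ tendsto_id)
  exact tendsto_neg_atBot_iff.mpr h2

lemma integrable_cexp_shift {b : ℂ} (hb : 0 < b.re) (z : ℂ) :
    Integrable (fun t : ℝ => cexp (-(b*(z+t)^2))) := by
  apply (integrable_cexp_quadratic hb (-2*b*z) (-b*z^2)).congr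
  filter_upwards with t
  congr 1
  ring

lemma norm_cexp' (w : ℂ) : ‖cexp w‖ = Real.exp w.re := by
  rw [Complex.norm_exp]

lemma psi_hasDerivAt {b : ℂ} (hb : 0 < b.re) (c : ℂ) :
    HasDerivAt (fun z : ℂ => ∫ t in Ioi (0:ℝ), cexp (-(b*(z+t)^2)))
      (-cexp (-(b*c^2))) c := by
  set M : ℝ := ‖c‖ + 1 with hM
  have hMpos : 0 < M := by positivity
  have hinner : ∀ (z : ℂ) (t : ℝ), HasDerivAt (fun z : ℂ => cexp (-(b*(z+t)^2)))
      (-(2*b*(z+t)) * cexp (-(b*(z+t)^2))) z := by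
    intro z t
    have h1 : HasDerivAt (fun z : ℂ => -(b*(z+t)^2)) (-(2*b*(z+t))) z := by
      have := (((hasDerivAt_id z).add_const (t:ℂ)).pow 2).const_mul b
      have := this.neg
      refine this.congr_deriv ?_
      simp only [id_eq]
      ring
    simpa [mul_comm] using h1.cexp
  have hball : ∀ z ∈ Metric.ball c 1, ‖z‖ ≤ M := by
    intro z hz
    have := mem_ball_iff_norm.mp hz
    calc ‖z‖ = ‖c + (z - c)‖ := by ring_nf
      _ ≤ ‖c‖ + ‖z - c‖ := norm_add_le _ _
      _ ≤ M := by rw [hM]; linarith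
  have hexp_bound : ∀ z : ℂ, ‖z‖ ≤ M → ∀ t : ℝ, 0 ≤ t →
      ‖cexp (-(b*(z+t)^2))‖ ≤ Real.exp (-b.re*t^2 + (2*‖b‖*M)*t + ‖b‖*M^2) := by
    intro z hz t ht
    rw [norm_cexp']
    apply Real.exp_le_exp.mpr
    have := re_quad_lower b z ht
    have hnb : 0 ≤ ‖b‖ := norm_nonneg b
    have hz0 : 0 ≤ ‖z‖ := norm_nonneg z
    simp only [Complex.neg_re]
    nlinarith [this, mul_le_mul_of_nonneg_left hz hnb]
  obtain ⟨hint, hderiv⟩ := hasDerivAt_integral_of_dominated_loc_of_deriv_le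
    (μ := volume.restrict (Ioi (0:ℝ)))
    (F := fun (z:ℂ) (t:ℝ) => cexp (-(b*(z+t)^2)))
    (F' := fun (z:ℂ) (t:ℝ) => -(2*b*(z+t)) * cexp (-(b*(z+t)^2)))
    (bound := fun t : ℝ => (2*‖b‖*(M + |t|)) * Real.exp (-b.re*t^2 + (2*‖b‖*M)*t + ‖b‖*M^2))
    (x₀ := c) (Metric.ball_mem_nhds c one_pos)
    (by
      filter_upwards with z
      exact ((by fun_prop : Continuous fun t : ℝ =>
        cexp (-(b*(z+(t:ℂ))^2))).aestronglyMeasurable).restrict)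
    ((integrable_cexp_shift hb c).integrableOn)
    (((by fun_prop : Continuous fun t : ℝ =>
        -(2*b*(c+(t:ℂ))) * cexp (-(b*(c+(t:ℂ))^2))).aestronglyMeasurable).restrict)
    (by
      rw [ae_restrict_iff' measurableSet_Ioi]
      filter_upwards with t ht
      intro z hz
      have hzM := hball z hz
      have ht' : 0 ≤ t := le_of_lt ht
      rw [norm_mul]
      have h1 : ‖-(2*b*(z+(t:ℂ)))‖ ≤ 2*‖b‖*(M + |t|) := by
        rw [norm_neg, norm_mul, norm_mul]
        have hzt : ‖z+(t:ℂ)‖ ≤ M + |t| := by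
          refine (norm_add_le _ _).trans ?_
          gcongr
          simp
        have h2 : ‖(2:ℂ)‖ = 2 := by norm_num
        rw [h2, mul_assoc, mul_assoc]
        gcongr
      exact mul_le_mul h1 (hexp_bound z hzM t ht') (norm_nonneg _) (by positivity))
    (by
      apply Integrable.integrableOn
      have h := (integrable_linear_gauss hb M (2*‖b‖*M) (‖b‖*M^2)).const_mul (2*‖b‖)
      apply h.congr
      filter_upwards with t
      ring)
    (by
      filter_upwards with t
      intro z hz
      exact hinner z t)
  have hval : (∫ t in Ioi (0:ℝ), -(2*b*(c+t)) * cexp (-(b*(c+t)^2))) = -cexp (-(b*c^2)) := by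
    have hFTC := integral_Ioi_of_hasDerivAt_of_tendsto' (a := 0)
      (f := fun t : ℝ => cexp (-(b*(c+t)^2)))
      (f' := fun t : ℝ => -(2*b*(c+t)) * cexp (-(b*(c+t)^2)))
      (m := 0)
      (by
        intro t _
        have h1 : HasDerivAt (fun w : ℂ => -(b*(c+w)^2)) (-(2*b*(c+(t:ℂ)))) (t:ℂ) := by
          have h0 := ((((hasDerivAt_id ((t:ℝ):ℂ)).const_add c).pow 2).const_mul b).neg
          refine h0.congr_deriv ?_
          simp only [id_eq]
          ring
        have h3 := h1.cexp.comp_ofReal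
        refine h3.congr_deriv ?_
        ring)
      hint
      (squeeze_zero_norm'
        (by
          filter_upwards [eventually_ge_atTop (0:ℝ)] with t ht
          exact hexp_bound c (by rw [hM]; linarith) t ht)
        (tendsto_gauss_zero hb _ _))
    rw [hFTC]
    simp
  rw [← hval]
  exact hderiv

lemma eq_of_deriv_eq {f g d : ℂ → ℂ}
    (hf : ∀ z, HasDerivAt f (d z) z) (hg : ∀ z, HasDerivAt g (d z) z)
    (h0 : f 0 = g 0) (z : ℂ) : f z = g z := by
  have key : f z - g z = f 0 - g 0 :=
    is_const_of_deriv_eq_zero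
      (fun u => ((hf u).sub (hg u)).differentiableAt)
      (fun u => by
        have h := ((hf u).sub (hg u)).deriv
        simpa using h) z 0
  have h2 : f z - g z = 0 := by rw [key, h0, sub_self]
  linear_combination h2

lemma cpow_half_sq {z : ℂ} (hz : z ≠ 0) : (z ^ (1/2 : ℂ))^2 = z := by
  rw [sq, ← Complex.cpow_add _ _ hz]
  norm_num

lemma re_cpow_half_pos {z : ℂ} (hz : 0 < z.re) : 0 < (z ^ (1/2 : ℂ)).re := by
  have h : (1/2 : ℂ) = (2⁻¹ : ℂ) := by norm_num
  rw [h, Complex.cpow_inv_two_re]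
  apply Real.sqrt_pos.mpr
  have h1 : 0 ≤ ‖z‖ := norm_nonneg z
  linarith [hz]

lemma sq_eq_sq_of_re_pos {u v : ℂ} (hu : 0 < u.re) (hv : 0 < v.re) (h : u^2 = v^2) : u = v := by
  have h2 : (u - v) * (u + v) = 0 := by linear_combination h
  rcases mul_eq_zero.mp h2 with h3 | h3
  · exact sub_eq_zero.mp h3
  · exfalso
    have h4 : (u + v).re = 0 := by rw [h3]; simp
    rw [Complex.add_re] at h4
    linarith

lemma pi_cpow_half : (Real.pi : ℂ) ^ (1/2 : ℂ) = ((Real.sqrt Real.pi : ℝ) : ℂ) := by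
  rw [show (1/2 : ℂ) = ((1/2 : ℝ) : ℂ) by norm_num, ← Complex.ofReal_cpow Real.pi_pos.le,
    ← Real.sqrt_eq_rpow]

lemma cerfc_hasDerivAt (w : ℂ) :
    HasDerivAt cerfc (-(2 / ((Real.sqrt Real.pi : ℝ) : ℂ)) * cexp (-w^2)) w := by
  have h := (psi_hasDerivAt (b := 1) (by norm_num) w).const_mul
    ((2:ℂ) / ((Real.sqrt Real.pi : ℝ) : ℂ))
  have hfun : (fun z : ℂ => (2:ℂ) / ((Real.sqrt Real.pi : ℝ):ℂ) *
      ∫ t in Ioi (0:ℝ), cexp (-((1:ℂ)*(z+t)^2))) = cerfc := by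
    funext z
    rw [cerfc]
    congr 1
    refine setIntegral_congr_fun measurableSet_Ioi fun t _ => ?_
    rw [one_mul]
  rw [hfun] at h
  refine h.congr_deriv ?_
  rw [one_mul]
  ring

lemma cerfc_differentiable : Differentiable ℂ cerfc :=
  fun w => (cerfc_hasDerivAt w).differentiableAt

lemma cerfc_continuous : Continuous cerfc := cerfc_differentiable.continuous

lemma cerfc_zero' : cerfc 0 = 1 := by
  have h : ∫ t in Ioi (0:ℝ), cexp (-((0:ℂ) + t)^2) = ((Real.sqrt Real.pi : ℝ):ℂ) / 2 := by
    have h2 := integral_gaussian_complex_Ioi (b := (1:ℂ)) (by norm_num)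
    rw [div_one, pi_cpow_half] at h2
    rw [← h2]
    refine setIntegral_congr_fun measurableSet_Ioi fun t _ => ?_
    rw [zero_add, neg_mul, one_mul]
  rw [cerfc, h]
  rw [mul_comm]
  field_simp

lemma psi_eq {b : ℂ} (hb : 0 < b.re) (c : ℂ) :
    ∫ t in Ioi (0:ℝ), cexp (-(b*(c+t)^2))
      = (b ^ (1/2:ℂ))⁻¹ * (((Real.sqrt Real.pi : ℝ):ℂ) / 2) * cerfc (b ^ (1/2:ℂ) * c) := by
  set ρ := b ^ (1/2:ℂ) with hρ
  have hbne : b ≠ 0 := fun h => by simp [h] at hb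
  have hρ2 : ρ^2 = b := cpow_half_sq hbne
  have hρre : 0 < ρ.re := re_cpow_half_pos hb
  have hρne : ρ ≠ 0 := fun h => by rw [h] at hρre; simp at hρre
  have key : ∀ z : ℂ, (fun c : ℂ => ∫ t in Ioi (0:ℝ), cexp (-(b*(c+t)^2))) z
      = (fun c : ℂ => ρ⁻¹ * (((Real.sqrt Real.pi : ℝ):ℂ) / 2) * cerfc (ρ * c)) z := by
    apply eq_of_deriv_eq (d := fun c => -cexp (-(b*c^2)))
    · exact fun z => psi_hasDerivAt hb z
    · intro z
      have h1 := (cerfc_hasDerivAt (ρ*z)).comp z ((hasDerivAt_id z).const_mul ρ)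
      have h2 := h1.const_mul (ρ⁻¹ * (((Real.sqrt Real.pi : ℝ):ℂ) / 2))
      refine h2.congr_deriv ?_
      have hsq : (ρ*z)^2 = b*z^2 := by rw [mul_pow, hρ2]
      rw [hsq]
      field_simp [sqrtpi_ne, hρne]
    · -- value at 0
      have hL : ∫ t in Ioi (0:ℝ), cexp (-(b*((0:ℂ)+t)^2)) = (Real.pi / b) ^ (1/2:ℂ) / 2 := by
        rw [← integral_gaussian_complex_Ioi hb]
        refine setIntegral_congr_fun measurableSet_Ioi fun t _ => ?_
        rw [zero_add, neg_mul]
      have hsqrt : ((Real.pi : ℂ) / b) ^ (1/2:ℂ) = ((Real.sqrt Real.pi : ℝ):ℂ) * ρ⁻¹ := by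
        apply sq_eq_sq_of_re_pos
        · apply re_cpow_half_pos
          rw [div_eq_mul_inv, Complex.re_ofReal_mul, Complex.inv_re]
          exact mul_pos Real.pi_pos (div_pos hb (Complex.normSq_pos.mpr hbne))
        · rw [Complex.re_ofReal_mul, Complex.inv_re]
          exact mul_pos sqrtpi_pos (div_pos hρre (Complex.normSq_pos.mpr hρne))
        · rw [mul_pow, cpow_half_sq (div_ne_zero (Complex.ofReal_ne_zero.mpr Real.pi_ne_zero) hbne),
            sqrtpi_sq, ← hρ2]
          field_simp
      show (∫ t in Ioi (0:ℝ), cexp (-(b*((0:ℂ)+t)^2)))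
        = ρ⁻¹ * (((Real.sqrt Real.pi : ℝ):ℂ)/2) * cerfc (ρ * 0)
      rw [hL, hsqrt, mul_zero, cerfc_zero']
      ring
  exact key c

lemma integrable_cexp_shift' (w : ℂ) : Integrable (fun t : ℝ => cexp (-(w+t)^2)) := by
  apply (integrable_cexp_shift (b := 1) (by norm_num) w).congr
  filter_upwards with t
  rw [one_mul]

lemma norm_two_div_sqrtpi : ‖(2 / ((Real.sqrt Real.pi : ℝ):ℂ))‖ = 2 / Real.sqrt Real.pi := by
  rw [norm_div]
  congr 1
  · norm_num
  · rw [Complex.norm_real, Real.norm_eq_abs, abs_of_pos sqrtpi_pos]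

lemma cerfc_add_neg (w : ℂ) : cerfc w + cerfc (-w) = 2 := by
  have hint : Integrable (fun t : ℝ => cexp (-(w+t)^2)) := integrable_cexp_shift' w
  have hfull : ∫ t : ℝ, cexp (-(w+t)^2) = ((Real.sqrt Real.pi : ℝ):ℂ) := by
    calc ∫ t : ℝ, cexp (-(w+t)^2)
        = ∫ t : ℝ, cexp ((-1)*(t:ℂ)^2 + (-2*w)*t + (-w^2)) := by
          congr 1; funext t; congr 1; ring
      _ = (↑Real.pi / -(-1)) ^ (1/2:ℂ) * cexp (-w^2 - (-2*w)^2/(4*(-1))) :=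
          integral_cexp_quadratic (by norm_num) _ _
      _ = ((Real.sqrt Real.pi : ℝ):ℂ) := by
          have e1 : -w^2 - (-2*w)^2/(4*(-1)) = 0 := by ring
          have e2 : (↑Real.pi / -(-1) : ℂ) = ↑Real.pi := by norm_num
          rw [e1, e2, Complex.exp_zero, mul_one, pi_cpow_half]
  have hrefl : ∫ t in Ioi (0:ℝ), cexp (-(-w+t)^2) = ∫ t in Iio (0:ℝ), cexp (-(w+t)^2) := by
    have h := integral_comp_neg_Ioi (c := (0:ℝ))
      (f := fun t : ℝ => cexp (-(w+t)^2))
    rw [neg_zero] at h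
    rw [← MeasureTheory.integral_Iic_eq_integral_Iio, ← h]
    refine setIntegral_congr_fun measurableSet_Ioi fun t _ => ?_
    congr 1
    push_cast
    ring
  have hsplit : (∫ t in Iio (0:ℝ), cexp (-(w+t)^2)) + ∫ t in Ioi (0:ℝ), cexp (-(w+t)^2)
      = ∫ t : ℝ, cexp (-(w+t)^2) := by
    have h := integral_add_compl (measurableSet_Ioi (a := (0:ℝ))) hint
    rw [compl_Ioi, MeasureTheory.integral_Iic_eq_integral_Iio] at h
    rw [← h]
    ring
  rw [cerfc, cerfc, hrefl, ← mul_add]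
  rw [add_comm (∫ t in Ioi (0:ℝ), cexp (-(w+t)^2)) _, hsplit, hfull]
  rw [div_mul_cancel₀ _ sqrtpi_ne]

lemma cerfc_neg_eq (w : ℂ) : cerfc (-w) = 2 - cerfc w := by
  have := cerfc_add_neg w
  linear_combination this

lemma cerfc_norm_le_of_re {z : ℂ} (hz : 0 ≤ z.re) : ‖cerfc z‖ ≤ Real.exp (-(z^2).re) := by
  have hre : ∀ t : ℝ, (-(z+t)^2).re = z.im^2 - (z.re+t)^2 := by
    intro t
    rw [Complex.neg_re, sq, Complex.mul_re]
    simp [Complex.add_re, Complex.add_im]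
    ring
  have hnorm : ∀ t : ℝ, ‖cexp (-(z+t)^2)‖ = Real.exp (z.im^2 - (z.re+t)^2) := by
    intro t
    rw [norm_cexp', hre]
  have h1 : ‖cerfc z‖ ≤ 2 / Real.sqrt Real.pi * ∫ t in Ioi (0:ℝ), ‖cexp (-(z+t)^2)‖ := by
    rw [cerfc, norm_mul, norm_two_div_sqrtpi]
    gcongr
    exact norm_integral_le_integral_norm _
  have h2 : (∫ t in Ioi (0:ℝ), ‖cexp (-(z+t)^2)‖)
      ≤ ∫ t in Ioi (0:ℝ), Real.exp (z.im^2 - z.re^2) * Real.exp (-t^2) := by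
    apply setIntegral_mono_on
    · exact (integrable_cexp_shift' z).norm.integrableOn
    · apply Integrable.integrableOn
      apply ((integrable_exp_neg_mul_sq one_pos).const_mul (Real.exp (z.im^2 - z.re^2))).congr
      filter_upwards with t
      rw [neg_one_mul]
    · exact measurableSet_Ioi
    · intro t ht
      rw [hnorm, ← Real.exp_add]
      apply Real.exp_le_exp.mpr
      have : 0 < t := ht
      nlinarith [hz, this.le]
  have h3 : (∫ t in Ioi (0:ℝ), Real.exp (z.im^2 - z.re^2) * Real.exp (-t^2))
      = Real.exp (z.im^2 - z.re^2) * (Real.sqrt Real.pi / 2) := by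
    rw [MeasureTheory.integral_const_mul]
    congr 1
    have h4 := integral_gaussian_Ioi 1
    simp only [one_mul, div_one] at h4
    rw [← h4]
    refine setIntegral_congr_fun measurableSet_Ioi fun t _ => ?_
    rw [neg_one_mul]
  have hzsq : (z^2).re = z.re^2 - z.im^2 := by
    rw [sq, Complex.mul_re]; ring
  calc ‖cerfc z‖ ≤ 2 / Real.sqrt Real.pi * ∫ t in Ioi (0:ℝ), ‖cexp (-(z+t)^2)‖ := h1
    _ ≤ 2 / Real.sqrt Real.pi * (Real.exp (z.im^2 - z.re^2) * (Real.sqrt Real.pi / 2)) := by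
        have hnn : (0:ℝ) ≤ 2 / Real.sqrt Real.pi := by positivity
        exact mul_le_mul_of_nonneg_left (h2.trans (le_of_eq h3)) hnn
    _ = Real.exp (-(z^2).re) := by
        rw [hzsq]
        have : -(z.re^2 - z.im^2) = z.im^2 - z.re^2 := by ring
        rw [this]
        field_simp

lemma cerfc_norm_le (z : ℂ) : ‖cerfc z‖ ≤ 2 + Real.exp (-(z^2).re) := by
  rcases le_or_gt 0 z.re with h | h
  · have := cerfc_norm_le_of_re h
    linarith [this]
  · have h2 : cerfc z = 2 - cerfc (-z) := by
      have := cerfc_neg_eq (-z)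
      rw [neg_neg] at this
      exact this
    rw [h2]
    have h3 : ‖(2 : ℂ) - cerfc (-z)‖ ≤ 2 + ‖cerfc (-z)‖ := by
      refine (norm_sub_le _ _).trans ?_
      norm_num
    have h4 : ‖cerfc (-z)‖ ≤ Real.exp (-((-z)^2).re) := by
      apply cerfc_norm_le_of_re
      rw [Complex.neg_re]
      linarith
    have h5 : ((-z)^2) = z^2 := by ring
    rw [h5] at h4
    linarith

lemma gauss1_norm_bound (c : ℂ) {M s : ℝ} (hM : ‖c‖ ≤ M) (hs : 0 ≤ s) :
    ‖cexp (-(c+(s:ℂ))^2)‖ ≤ Real.exp (-1*s^2 + 2*M*s + M^2) := by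
  have hq1 := re_quad_lower 1 c hs
  simp only [Complex.one_re, norm_one, one_mul] at hq1
  rw [norm_cexp', Complex.neg_re]
  apply Real.exp_le_exp.mpr
  have e1 : ((1:ℂ)*(c+(s:ℂ))^2).re = ((c+(s:ℂ))^2).re := by rw [one_mul]
  nlinarith [norm_nonneg c]

lemma gauss2_norm_bound (lam c d : ℂ) {M X s : ℝ} (hM : ‖c‖ ≤ M) (hX : ‖d‖ ≤ X)
    (hs : 0 ≤ s) :
    ‖cexp (-(c+(s:ℂ))^2)‖ * Real.exp (-((lam*(d+(s:ℂ)))^2).re)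
      ≤ Real.exp (-(1+(lam^2).re)*s^2 + (2*M + 2*‖lam^2‖*X)*s + (M^2 + ‖lam^2‖*X^2)) := by
  have hq1 := re_quad_lower 1 c hs
  simp only [Complex.one_re, norm_one, one_mul] at hq1
  have hq2 := re_quad_lower (lam^2) d hs
  rw [norm_cexp', ← Real.exp_add, Complex.neg_re]
  apply Real.exp_le_exp.mpr
  have e2 : ((lam*(d+(s:ℂ)))^2).re = ((lam^2)*(d+(s:ℂ))^2).re := by rw [mul_pow]
  rw [e2]
  have hXnn : 0 ≤ X := (norm_nonneg _).trans hX
  have hMnn : 0 ≤ M := (norm_nonneg _).trans hM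
  nlinarith [norm_nonneg c, norm_nonneg (lam^2), norm_nonneg d,
    mul_le_mul_of_nonneg_left hX (norm_nonneg (lam^2)),
    mul_le_mul_of_nonneg_right (mul_le_mul_of_nonneg_left hX (norm_nonneg (lam^2))) hs,
    mul_le_mul hX hX (norm_nonneg d) hXnn,
    mul_le_mul_of_nonneg_right hM hs, mul_le_mul hM hM (norm_nonneg c) hMnn]

lemma main_norm_bound (lam x y : ℂ) {M X s : ℝ} (hM : ‖x - y‖ ≤ M) (hX : ‖x‖ ≤ X)
    (hs : 0 ≤ s) :
    ‖cexp (-(x+(s:ℂ)-y)^2) * cerfc (lam*(x+(s:ℂ)))‖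
      ≤ 2 * Real.exp (-1*s^2 + 2*M*s + M^2)
        + Real.exp (-(1+(lam^2).re)*s^2 + (2*M + 2*‖lam^2‖*X)*s
            + (M^2 + ‖lam^2‖*X^2)) := by
  have e1 : (-(x+(s:ℂ)-y)^2) = -(((x-y)+(s:ℂ))^2) := by ring
  have h1 : ‖cexp (-(x+(s:ℂ)-y)^2)‖ ≤ Real.exp (-1*s^2 + 2*M*s + M^2) := by
    rw [e1]; exact gauss1_norm_bound (x-y) hM hs
  have h2 : ‖cexp (-(x+(s:ℂ)-y)^2)‖ * Real.exp (-((lam*(x+(s:ℂ)))^2).re)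
      ≤ Real.exp (-(1+(lam^2).re)*s^2 + (2*M + 2*‖lam^2‖*X)*s + (M^2 + ‖lam^2‖*X^2)) := by
    rw [e1]; exact gauss2_norm_bound lam (x-y) x hM hX hs
  calc ‖cexp (-(x+(s:ℂ)-y)^2) * cerfc (lam*(x+(s:ℂ)))‖
      = ‖cexp (-(x+(s:ℂ)-y)^2)‖ * ‖cerfc (lam*(x+(s:ℂ)))‖ := norm_mul _ _
    _ ≤ ‖cexp (-(x+(s:ℂ)-y)^2)‖ * (2 + Real.exp (-((lam*(x+(s:ℂ)))^2).re)) :=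
        mul_le_mul_of_nonneg_left (cerfc_norm_le _) (norm_nonneg _)
    _ = 2 * ‖cexp (-(x+(s:ℂ)-y)^2)‖
        + ‖cexp (-(x+(s:ℂ)-y)^2)‖ * Real.exp (-((lam*(x+(s:ℂ)))^2).re) := by ring
    _ ≤ _ := add_le_add (by linarith [h1]) h2

lemma main_norm_bound0 (lam z : ℂ) {M s : ℝ} (hM : ‖z‖ ≤ M) (hs : 0 ≤ s) :
    ‖cexp (-(z+(s:ℂ))^2) * cerfc (lam*(z+(s:ℂ)))‖
      ≤ 2 * Real.exp (-1*s^2 + 2*M*s + M^2)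
        + Real.exp (-(1+(lam^2).re)*s^2 + (2*M + 2*‖lam^2‖*M)*s
            + (M^2 + ‖lam^2‖*M^2)) := by
  have h1 := gauss1_norm_bound z hM hs
  have h2 := gauss2_norm_bound lam z z hM hM hs
  calc ‖cexp (-(z+(s:ℂ))^2) * cerfc (lam*(z+(s:ℂ)))‖
      = ‖cexp (-(z+(s:ℂ))^2)‖ * ‖cerfc (lam*(z+(s:ℂ)))‖ := norm_mul _ _
    _ ≤ ‖cexp (-(z+(s:ℂ))^2)‖ * (2 + Real.exp (-((lam*(z+(s:ℂ)))^2).re)) :=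
        mul_le_mul_of_nonneg_left (cerfc_norm_le _) (norm_nonneg _)
    _ = 2 * ‖cexp (-(z+(s:ℂ))^2)‖
        + ‖cexp (-(z+(s:ℂ))^2)‖ * Real.exp (-((lam*(z+(s:ℂ)))^2).re) := by ring
    _ ≤ _ := add_le_add (by linarith [h1]) h2

lemma integrable_gauss2 (x y lam : ℂ) (hl : -1 < (lam^2).re) :
    Integrable (fun s : ℝ => cexp (-(x + (s:ℂ) - y)^2 - (lam*(x + (s:ℂ)))^2)) := by
  have hb2 : 0 < (1 + lam^2).re := by
    rw [Complex.add_re, Complex.one_re]; linarith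
  apply (integrable_cexp_quadratic hb2 (-2*(x-y) - 2*lam^2*x) (-(x-y)^2 - lam^2*x^2)).congr
  filter_upwards with s
  congr 1
  ring

lemma integrable_main (x y lam : ℂ) (hl : -1 < (lam^2).re) :
    Integrable (fun s : ℝ => cexp (-(x + (s:ℂ) - y)^2) * cerfc (lam * (x + (s:ℂ)))) := by
  have hcont : Continuous (fun s : ℝ => cexp (-(x + (s:ℂ) - y)^2) * cerfc (lam * (x + (s:ℂ)))) := by
    apply Continuous.mul
    · fun_prop
    · exact cerfc_continuous.comp (by fun_prop)
  have hG1 : Integrable (fun s : ℝ => ‖cexp (-(x + (s:ℂ) - y)^2)‖) := by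
    apply Integrable.norm
    apply (integrable_cexp_shift' (x - y)).congr
    filter_upwards with s
    congr 1
    ring
  have hG2 := (integrable_gauss2 x y lam hl).norm
  apply Integrable.mono' ((hG1.const_mul 2).add hG2) hcont.aestronglyMeasurable
  filter_upwards with s
  show ‖cexp (-(x + (s:ℂ) - y)^2) * cerfc (lam * (x + (s:ℂ)))‖
    ≤ 2*‖cexp (-(x + (s:ℂ) - y)^2)‖ + ‖cexp (-(x + (s:ℂ) - y)^2 - (lam*(x+(s:ℂ)))^2)‖
  rw [norm_mul]
  have hc := cerfc_norm_le (lam * (x + (s:ℂ)))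
  have he : ‖cexp (-(x + (s:ℂ) - y)^2)‖ * Real.exp (-((lam*(x+(s:ℂ)))^2).re)
      = ‖cexp (-(x + (s:ℂ) - y)^2 - (lam*(x+(s:ℂ)))^2)‖ := by
    rw [norm_cexp', norm_cexp', ← Real.exp_add]
    congr 1
  nlinarith [norm_nonneg (cexp (-(x + (s:ℂ) - y)^2)), norm_nonneg (cerfc (lam * (x + (s:ℂ)))),
    Real.exp_pos (-((lam*(x+(s:ℂ)))^2).re)]

lemma phi_hasDerivAt_y (x lam : ℂ) (hl : -1 < (lam^2).re) (y : ℂ) :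
    HasDerivAt (fun y : ℂ => ∫ s in Ioi (0:ℝ),
        cexp (-(x + (s:ℂ) - y)^2) * cerfc (lam * (x + (s:ℂ))))
      (∫ s in Ioi (0:ℝ),
        (2*(x + (s:ℂ) - y)) * (cexp (-(x + (s:ℂ) - y)^2) * cerfc (lam * (x + (s:ℂ))))) y ∧
    IntegrableOn (fun s : ℝ =>
        (2*(x + (s:ℂ) - y)) * (cexp (-(x + (s:ℂ) - y)^2) * cerfc (lam * (x + (s:ℂ)))))
      (Ioi 0) := by
  have hb2' : 0 < 1 + (lam^2).re := by linarith
  set M : ℝ := ‖x - y‖ + 1 with hM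
  have hbound : Integrable (fun s : ℝ => (2*(M+|s|)) *
      (2 * Real.exp (-1*s^2 + 2*M*s + M^2)
        + Real.exp (-(1+(lam^2).re)*s^2 + (2*M + 2*‖lam^2‖*‖x‖)*s
            + (M^2 + ‖lam^2‖*‖x‖^2)))) := by
    have h1 := (integrable_linear_gauss one_pos M (2*M) (M^2)).const_mul 4
    have h2 := (integrable_linear_gauss hb2' M (2*M + 2*‖lam^2‖*‖x‖)
      (M^2 + ‖lam^2‖*‖x‖^2)).const_mul 2
    apply (h1.add h2).congr
    filter_upwards with s
    simp only [Pi.add_apply]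
    ring
  obtain ⟨hint, hderiv⟩ := hasDerivAt_integral_of_dominated_loc_of_deriv_le
    (μ := volume.restrict (Ioi (0:ℝ)))
    (F := fun (z:ℂ) (s:ℝ) => cexp (-(x + (s:ℂ) - z)^2) * cerfc (lam * (x + (s:ℂ))))
    (F' := fun (z:ℂ) (s:ℝ) =>
      (2*(x + (s:ℂ) - z)) * (cexp (-(x + (s:ℂ) - z)^2) * cerfc (lam * (x + (s:ℂ)))))
    (x₀ := y) (Metric.ball_mem_nhds y one_pos)
    (by
      filter_upwards with z
      exact (integrable_main x z lam hl).aestronglyMeasurable.restrict)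
    ((integrable_main x y lam hl).integrableOn)
    (by
      apply Continuous.aestronglyMeasurable ?_ |>.restrict
      apply Continuous.mul (by fun_prop)
      exact (by fun_prop : Continuous fun s : ℝ => cexp (-(x + (s:ℂ) - y)^2)).mul
        (cerfc_continuous.comp (by fun_prop)))
    (by
      rw [ae_restrict_iff' measurableSet_Ioi]
      filter_upwards with s hs
      intro z hz
      have hs' : 0 ≤ s := le_of_lt hs
      have hxz : ‖x - z‖ ≤ M := by
        have hd := mem_ball_iff_norm.mp hz
        have h3 : ‖x - z‖ ≤ ‖x - y‖ + ‖y - z‖ := by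
          have : x - z = (x - y) + (y - z) := by ring
          rw [this]; exact norm_add_le _ _
        have h4 : ‖y - z‖ = ‖z - y‖ := norm_sub_rev _ _
        rw [hM]; linarith
      rw [norm_mul]
      apply mul_le_mul ?_ (main_norm_bound lam x z hxz (le_refl _) hs') (norm_nonneg _) (by positivity)
      rw [norm_mul]
      have h5 : ‖x + (s:ℂ) - z‖ ≤ M + |s| := by
        have he : x + (s:ℂ) - z = (x - z) + (s:ℂ) := by ring
        rw [he]
        refine (norm_add_le _ _).trans ?_
        gcongr
        simp
      have h6 : ‖(2:ℂ)‖ = 2 := by norm_num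
      rw [h6]
      linarith [h5]
    )
    hbound.integrableOn
    (by
      filter_upwards with s
      intro z hz
      have h1 : HasDerivAt (fun z : ℂ => -(x+(s:ℂ)-z)^2) (2*(x+(s:ℂ)-z)) z := by
        have h0 := (((hasDerivAt_id z).const_sub (x+(s:ℂ))).pow 2).neg
        refine h0.congr_deriv ?_
        simp only [id_eq]
        ring
      have h2 := h1.cexp.mul_const (cerfc (lam*(x+(s:ℂ))))
      refine h2.congr_deriv ?_
      ring)
  exact ⟨hderiv, hint⟩

lemma gauss2_integral (x y lam : ℂ) (hl : -1 < (lam^2).re) :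
    ∫ s in Ioi (0:ℝ), cexp (-(x + (s:ℂ) - y)^2 - (lam*(x + (s:ℂ)))^2)
      = cexp (-((lam*y)^2/(lam^2+1))) *
        ((sqrtC (lam^2+1))⁻¹ * (((Real.sqrt Real.pi : ℝ):ℂ)/2) *
          cerfc (sqrtC (lam^2+1) * (x - y/(lam^2+1)))) := by
  have hb2 : 0 < (lam^2+1).re := by rw [Complex.add_re, Complex.one_re]; linarith
  have hbne : (lam^2+1) ≠ 0 := fun h => by rw [h] at hb2; simp at hb2
  have key : ∀ s : ℝ, -(x + (s:ℂ) - y)^2 - (lam*(x + (s:ℂ)))^2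
      = -((lam^2+1)*((x - y/(lam^2+1)) + (s:ℂ))^2) + (-((lam*y)^2/(lam^2+1))) := by
    intro s
    field_simp
    ring
  calc ∫ s in Ioi (0:ℝ), cexp (-(x + (s:ℂ) - y)^2 - (lam*(x + (s:ℂ)))^2)
      = ∫ s in Ioi (0:ℝ), cexp (-((lam^2+1)*((x - y/(lam^2+1)) + (s:ℂ))^2))
          * cexp (-((lam*y)^2/(lam^2+1))) := by
        refine setIntegral_congr_fun measurableSet_Ioi fun s _ => ?_
        rw [← Complex.exp_add, key]
    _ = (∫ s in Ioi (0:ℝ), cexp (-((lam^2+1)*((x - y/(lam^2+1)) + (s:ℂ))^2)))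
          * cexp (-((lam*y)^2/(lam^2+1))) := by
        exact integral_mul_const _ _
    _ = _ := by
        rw [psi_eq hb2]
        simp only [sqrtC]
        ring

lemma phi_deriv_y_val (x y lam : ℂ) (hl : -1 < (lam^2).re) :
    (∫ s in Ioi (0:ℝ),
        (2*(x + (s:ℂ) - y)) * (cexp (-(x + (s:ℂ) - y)^2) * cerfc (lam * (x + (s:ℂ)))))
      = cexp (-(x-y)^2) * cerfc (lam*x)
        - (2*lam/((Real.sqrt Real.pi : ℝ):ℂ)) *
            ∫ s in Ioi (0:ℝ), cexp (-(x + (s:ℂ) - y)^2 - (lam*(x + (s:ℂ)))^2) := by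
  have hb2' : 0 < 1 + (lam^2).re := by linarith
  set c2 : ℂ := 2*lam/((Real.sqrt Real.pi : ℝ):ℂ) with hc2
  have hFint := (phi_hasDerivAt_y x lam hl y).2
  have hGint : IntegrableOn (fun s : ℝ =>
      c2 * cexp (-(x + (s:ℂ) - y)^2 - (lam*(x + (s:ℂ)))^2)) (Ioi 0) :=
    ((integrable_gauss2 x y lam hl).const_mul c2).integrableOn
  -- FTC for g = -(cexp * cerfc)
  have hderiv : ∀ s ∈ Ici (0:ℝ), HasDerivAt
      (fun s : ℝ => -(cexp (-(x+(s:ℂ)-y)^2) * cerfc (lam*(x+(s:ℂ)))))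
      ((2*(x + (s:ℂ) - y)) * (cexp (-(x + (s:ℂ) - y)^2) * cerfc (lam * (x + (s:ℂ))))
        + c2 * cexp (-(x + (s:ℂ) - y)^2 - (lam*(x + (s:ℂ)))^2)) s := by
    intro s _
    have hu : HasDerivAt (fun w : ℂ => cexp (-(x+w-y)^2))
        (cexp (-(x+(s:ℂ)-y)^2) * (-(2*(x+(s:ℂ)-y)))) (s:ℂ) := by
      have hid : HasDerivAt (fun w : ℂ => x + w - y) 1 (s:ℂ) := by
        simpa using ((hasDerivAt_id ((s:ℝ):ℂ)).const_add x).sub_const y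
      have h1 : HasDerivAt (fun w : ℂ => -(x+w-y)^2) (-(2*(x+(s:ℂ)-y))) (s:ℂ) := by
        have h0 := (hid.pow 2).neg
        refine h0.congr_deriv ?_
        ring
      exact h1.cexp
    have hv : HasDerivAt (fun w : ℂ => cerfc (lam*(x+w)))
        ((-(2 / ((Real.sqrt Real.pi : ℝ):ℂ)) * cexp (-(lam*(x+(s:ℂ)))^2)) * lam) (s:ℂ) := by
      have hin : HasDerivAt (fun w : ℂ => lam*(x+w)) lam (s:ℂ) := by
        have h0 := ((hasDerivAt_id ((s:ℝ):ℂ)).const_add x).const_mul lam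
        simpa using h0
      have hcomp := HasDerivAt.comp ((s:ℝ):ℂ) (cerfc_hasDerivAt (lam*(x+(s:ℂ)))) hin
      exact hcomp
    have hprod := (hu.mul hv).neg.comp_ofReal
    refine hprod.congr_deriv ?_
    have hcombine : cexp (-(x + (s:ℂ) - y)^2 - (lam*(x + (s:ℂ)))^2)
        = cexp (-(x + (s:ℂ) - y)^2) * cexp (-(lam*(x + (s:ℂ)))^2) := by
      rw [← Complex.exp_add]
      ring_nf
    rw [hcombine, hc2]
    field_simp
    ring
  have htend : Tendsto (fun s : ℝ => -(cexp (-(x+(s:ℂ)-y)^2) * cerfc (lam*(x+(s:ℂ)))))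
      atTop (nhds 0) := by
    have t1 := (tendsto_gauss_zero one_pos (2*‖x-y‖) (‖x-y‖^2)).const_mul (2:ℝ)
    have t2 := tendsto_gauss_zero hb2' (2*‖x-y‖ + 2*‖lam^2‖*‖x‖)
      (‖x-y‖^2 + ‖lam^2‖*‖x‖^2)
    have t3 : Tendsto (fun s : ℝ => 2 * Real.exp (-1*s^2 + 2*‖x-y‖*s + ‖x-y‖^2)
        + Real.exp (-(1+(lam^2).re)*s^2 + (2*‖x-y‖ + 2*‖lam^2‖*‖x‖)*s
            + (‖x-y‖^2 + ‖lam^2‖*‖x‖^2))) atTop (nhds 0) := by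
      simpa using t1.add t2
    apply squeeze_zero_norm' ?_ t3
    filter_upwards [eventually_ge_atTop (0:ℝ)] with s hs
    rw [norm_neg]
    exact main_norm_bound lam x y (le_refl _) (le_refl _) hs
  have hg'int : IntegrableOn (fun s : ℝ =>
      (2*(x + (s:ℂ) - y)) * (cexp (-(x + (s:ℂ) - y)^2) * cerfc (lam * (x + (s:ℂ))))
        + c2 * cexp (-(x + (s:ℂ) - y)^2 - (lam*(x + (s:ℂ)))^2)) (Ioi 0) :=
    hFint.add hGint
  have hFTC := integral_Ioi_of_hasDerivAt_of_tendsto' hderiv hg'int htend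
  rw [MeasureTheory.integral_add hFint hGint] at hFTC
  have h0 : -(-(cexp (-(x+((0:ℝ):ℂ)-y)^2) * cerfc (lam*(x+((0:ℝ):ℂ)))))
      = cexp (-(x-y)^2) * cerfc (lam*x) := by
    push_cast
    ring_nf
  rw [MeasureTheory.integral_const_mul] at hFTC
  have := hFTC
  rw [zero_sub] at this
  have h2 : (∫ s in Ioi (0:ℝ),
      (2*(x + (s:ℂ) - y)) * (cexp (-(x + (s:ℂ) - y)^2) * cerfc (lam * (x + (s:ℂ)))))
      = -(-(cexp (-(x+((0:ℝ):ℂ)-y)^2) * cerfc (lam*(x+((0:ℝ):ℂ)))))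
        - c2 * ∫ s in Ioi (0:ℝ), cexp (-(x + (s:ℂ) - y)^2 - (lam*(x + (s:ℂ)))^2) := by
    linear_combination this
  rw [h2, h0]

lemma integrable_gauss_real {β : ℝ} (hβ : 0 < β) (γ δ : ℝ) :
    Integrable (fun s : ℝ => Real.exp (-β*s^2 + γ*s + δ)) := by
  have h := integrable_linear_gauss hβ 1 γ δ
  apply h.mono' (Continuous.aestronglyMeasurable (by fun_prop))
  filter_upwards with s
  rw [Real.norm_eq_abs, abs_of_pos (Real.exp_pos _)]
  nlinarith [Real.exp_pos (-β*s^2+γ*s+δ), abs_nonneg s]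

lemma phi_hasDerivAt_x (lam : ℂ) (hl : -1 < (lam^2).re) (x : ℂ) :
    HasDerivAt (fun z : ℂ => ∫ s in Ioi (0:ℝ),
        cexp (-(z + (s:ℂ))^2) * cerfc (lam * (z + (s:ℂ))))
      (-(cexp (-x^2) * cerfc (lam*x))) x := by
  have hb2' : 0 < 1 + (lam^2).re := by linarith
  set M : ℝ := ‖x‖ + 1 with hM
  -- derivative of the integrand, (u+d) order
  have hD : ∀ (d w : ℂ), HasDerivAt (fun u : ℂ => cexp (-(u+d)^2) * cerfc (lam*(u+d)))
      ((cexp (-(w+d)^2) * (-(2*(w+d)))) * cerfc (lam*(w+d))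
        + cexp (-(w+d)^2) *
          ((-(2/((Real.sqrt Real.pi:ℝ):ℂ)) * cexp (-(lam*(w+d))^2)) * lam)) w := by
    intro d w
    have hid : HasDerivAt (fun u : ℂ => u + d) 1 w := by
      simpa using (hasDerivAt_id w).add_const d
    have hu : HasDerivAt (fun u : ℂ => cexp (-(u+d)^2)) (cexp (-(w+d)^2) * (-(2*(w+d)))) w := by
      have h1 : HasDerivAt (fun u : ℂ => -(u+d)^2) (-(2*(w+d))) w := by
        have h0 := (hid.pow 2).neg
        refine h0.congr_deriv ?_
        ring
      exact h1.cexp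
    have hv : HasDerivAt (fun u : ℂ => cerfc (lam*(u+d)))
        ((-(2/((Real.sqrt Real.pi:ℝ):ℂ)) * cexp (-(lam*(w+d))^2)) * lam) w := by
      have hin : HasDerivAt (fun u : ℂ => lam*(u+d)) lam w := by
        simpa using hid.const_mul lam
      have hcomp := HasDerivAt.comp w (cerfc_hasDerivAt (lam*(w+d))) hin
      exact hcomp
    exact hu.mul hv
  -- same, (c+u) order
  have hDc : ∀ (c w : ℂ), HasDerivAt (fun u : ℂ => cexp (-(c+u)^2) * cerfc (lam*(c+u)))
      ((cexp (-(c+w)^2) * (-(2*(c+w)))) * cerfc (lam*(c+w))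
        + cexp (-(c+w)^2) *
          ((-(2/((Real.sqrt Real.pi:ℝ):ℂ)) * cexp (-(lam*(c+w))^2)) * lam)) w := by
    intro c w
    have hid : HasDerivAt (fun u : ℂ => c + u) 1 w := by
      simpa using (hasDerivAt_id w).const_add c
    have hu : HasDerivAt (fun u : ℂ => cexp (-(c+u)^2)) (cexp (-(c+w)^2) * (-(2*(c+w)))) w := by
      have h1 : HasDerivAt (fun u : ℂ => -(c+u)^2) (-(2*(c+w))) w := by
        have h0 := (hid.pow 2).neg
        refine h0.congr_deriv ?_
        ring
      exact h1.cexp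
    have hv : HasDerivAt (fun u : ℂ => cerfc (lam*(c+u)))
        ((-(2/((Real.sqrt Real.pi:ℝ):ℂ)) * cexp (-(lam*(c+w))^2)) * lam) w := by
      have hin : HasDerivAt (fun u : ℂ => lam*(c+u)) lam w := by
        simpa using hid.const_mul lam
      have hcomp := HasDerivAt.comp w (cerfc_hasDerivAt (lam*(c+w))) hin
      exact hcomp
    exact hu.mul hv
  have hint0 : ∀ z : ℂ, Integrable (fun s : ℝ => cexp (-(z + (s:ℂ))^2) * cerfc (lam * (z + (s:ℂ)))) := by
    intro z
    apply (integrable_main z 0 lam hl).congr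
    filter_upwards with s
    rw [sub_zero]
  obtain ⟨hint, hderiv⟩ := hasDerivAt_integral_of_dominated_loc_of_deriv_le
    (μ := volume.restrict (Ioi (0:ℝ)))
    (F := fun (z:ℂ) (s:ℝ) => cexp (-(z + (s:ℂ))^2) * cerfc (lam * (z + (s:ℂ))))
    (F' := fun (z:ℂ) (s:ℝ) =>
      (cexp (-(z+(s:ℂ))^2) * (-(2*(z+(s:ℂ))))) * cerfc (lam*(z+(s:ℂ)))
        + cexp (-(z+(s:ℂ))^2) *
          ((-(2/((Real.sqrt Real.pi:ℝ):ℂ)) * cexp (-(lam*(z+(s:ℂ)))^2)) * lam))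
    (bound := fun s : ℝ => (2*(M+|s|)) *
      (2 * Real.exp (-1*s^2 + 2*M*s + M^2)
        + Real.exp (-(1+(lam^2).re)*s^2 + (2*M + 2*‖lam^2‖*M)*s + (M^2 + ‖lam^2‖*M^2)))
      + (2*‖lam‖/Real.sqrt Real.pi) *
          Real.exp (-(1+(lam^2).re)*s^2 + (2*M + 2*‖lam^2‖*M)*s + (M^2 + ‖lam^2‖*M^2)))
    (x₀ := x) (Metric.ball_mem_nhds x one_pos)
    (by
      filter_upwards with z
      exact (hint0 z).aestronglyMeasurable.restrict)
    ((hint0 x).integrableOn)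
    (by
      apply Continuous.aestronglyMeasurable ?_ |>.restrict
      apply Continuous.add
      · exact ((by fun_prop : Continuous fun s : ℝ => cexp (-(x+(s:ℂ))^2) * (-(2*(x+(s:ℂ))))).mul
          (cerfc_continuous.comp (by fun_prop)))
      · fun_prop)
    (by
      rw [ae_restrict_iff' measurableSet_Ioi]
      filter_upwards with s hs
      intro z hz
      have hs' : 0 ≤ s := le_of_lt hs
      have hzM : ‖z‖ ≤ M := by
        have hd := mem_ball_iff_norm.mp hz
        have h3 : ‖z‖ ≤ ‖x‖ + ‖z - x‖ := by
          have : z = x + (z - x) := by ring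
          nth_rewrite 1 [this]
          exact norm_add_le _ _
        rw [hM]; linarith
      refine (norm_add_le _ _).trans (add_le_add ?_ ?_)
      · have e : (cexp (-(z+(s:ℂ))^2) * (-(2*(z+(s:ℂ))))) * cerfc (lam*(z+(s:ℂ)))
            = (-(2*(z+(s:ℂ)))) * (cexp (-(z+(s:ℂ))^2) * cerfc (lam*(z+(s:ℂ)))) := by ring
        rw [e, norm_mul]
        apply mul_le_mul ?_ (main_norm_bound0 lam z hzM hs') (norm_nonneg _) (by positivity)
        rw [norm_neg, norm_mul]
        have h5 : ‖z + (s:ℂ)‖ ≤ M + |s| := by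
          refine (norm_add_le _ _).trans ?_
          gcongr
          simp
        have h6 : ‖(2:ℂ)‖ = 2 := by norm_num
        rw [h6]
        linarith
      · rw [norm_mul, norm_mul, norm_mul, norm_neg]
        have h7 : ‖((2:ℂ)/((Real.sqrt Real.pi:ℝ):ℂ))‖ = 2/Real.sqrt Real.pi :=
          norm_two_div_sqrtpi
        have h8 : ‖cexp (-(lam*(z+(s:ℂ)))^2)‖ = Real.exp (-((lam*(z+(s:ℂ)))^2).re) := by
          rw [norm_cexp', Complex.neg_re]
        have h9 := gauss2_norm_bound lam z z hzM hzM hs'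
        rw [h7, h8]
        calc ‖cexp (-(z+(s:ℂ))^2)‖ * (2/Real.sqrt Real.pi
              * Real.exp (-((lam*(z+(s:ℂ)))^2).re) * ‖lam‖)
            = (2*‖lam‖/Real.sqrt Real.pi) *
              (‖cexp (-(z+(s:ℂ))^2)‖ * Real.exp (-((lam*(z+(s:ℂ)))^2).re)) := by ring
          _ ≤ _ := by
              apply mul_le_mul_of_nonneg_left h9 (by positivity))
    (by
      apply Integrable.integrableOn
      have h1 := (integrable_linear_gauss one_pos M (2*M) (M^2)).const_mul 4
      have h2 := (integrable_linear_gauss hb2' M (2*M + 2*‖lam^2‖*M)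
        (M^2 + ‖lam^2‖*M^2)).const_mul 2
      have h3 := (integrable_gauss_real hb2' (2*M + 2*‖lam^2‖*M)
        (M^2 + ‖lam^2‖*M^2)).const_mul (2*‖lam‖/Real.sqrt Real.pi)
      apply ((h1.add h2).add h3).congr
      filter_upwards with s
      simp only [Pi.add_apply]
      ring)
    (by
      filter_upwards with s
      intro z hz
      exact hD (s:ℂ) z)
  -- compute the value of the derivative integral by FTC
  have hFTC := integral_Ioi_of_hasDerivAt_of_tendsto' (a := 0)
    (f := fun s : ℝ => cexp (-(x+(s:ℂ))^2) * cerfc (lam*(x+(s:ℂ))))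
    (f' := fun s : ℝ =>
      (cexp (-(x+(s:ℂ))^2) * (-(2*(x+(s:ℂ))))) * cerfc (lam*(x+(s:ℂ)))
        + cexp (-(x+(s:ℂ))^2) *
          ((-(2/((Real.sqrt Real.pi:ℝ):ℂ)) * cexp (-(lam*(x+(s:ℂ)))^2)) * lam))
    (m := 0)
    (fun s _ => (hDc x (s:ℂ)).comp_ofReal)
    hint
    (by
      have t1 := (tendsto_gauss_zero one_pos (2*M) (M^2)).const_mul (2:ℝ)
      have t2 := tendsto_gauss_zero hb2' (2*M + 2*‖lam^2‖*M) (M^2 + ‖lam^2‖*M^2)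
      have t3 : Tendsto (fun s : ℝ => 2 * Real.exp (-1*s^2 + 2*M*s + M^2)
          + Real.exp (-(1+(lam^2).re)*s^2 + (2*M + 2*‖lam^2‖*M)*s
              + (M^2 + ‖lam^2‖*M^2))) atTop (nhds 0) := by
        simpa using t1.add t2
      apply squeeze_zero_norm' ?_ t3
      filter_upwards [eventually_ge_atTop (0:ℝ)] with s hs
      exact main_norm_bound0 lam x (by rw [hM]; linarith) hs)
  rw [hFTC] at hderiv
  have h0 : (0:ℂ) - cexp (-(x+((0:ℝ):ℂ))^2) * cerfc (lam*(x+((0:ℝ):ℂ)))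
      = -(cexp (-x^2) * cerfc (lam*x)) := by
    push_cast
    ring_nf
  rw [h0] at hderiv
  exact hderiv

lemma sqrtC_facts (lam : ℂ) (hl : -1 < (lam^2).re) :
    (sqrtC (lam^2+1))^2 = lam^2+1 ∧ sqrtC (lam^2+1) ≠ 0 := by
  have hb2 : 0 < (lam^2+1).re := by rw [Complex.add_re, Complex.one_re]; linarith
  have hbne : (lam^2+1) ≠ 0 := fun h => by rw [h] at hb2; simp at hb2
  have h1 : (sqrtC (lam^2+1))^2 = lam^2+1 := cpow_half_sq hbne
  have h2 : 0 < (sqrtC (lam^2+1)).re := re_cpow_half_pos hb2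
  exact ⟨h1, fun h => by rw [h] at h2; simp at h2⟩

lemma fY_eq_zero (x lam : ℂ) (hl : -1 < (lam^2).re) (y : ℂ) :
    (∫ s in Ioi (0:ℝ), cexp (-((-x) + (s:ℂ) - y)^2) * cerfc (lam * ((-x) + (s:ℂ))))
      - (∫ s in Ioi (0:ℝ), cexp (-(x + (s:ℂ) - (-y))^2) * cerfc (lam * (x + (s:ℂ))))
      - ((Real.sqrt Real.pi : ℝ):ℂ) * cerfc (lam * y / sqrtC (lam^2+1))
      + ((Real.sqrt Real.pi : ℝ):ℂ) * cerfc (x + y) = 0 := by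
  obtain ⟨hμsq, hμne⟩ := sqrtC_facts lam hl
  set μ := sqrtC (lam^2+1) with hμ
  have hb2 : 0 < (lam^2+1).re := by rw [Complex.add_re, Complex.one_re]; linarith
  have hbne : (lam^2+1) ≠ 0 := fun h => by rw [h] at hb2; simp at hb2
  set sp := ((Real.sqrt Real.pi : ℝ):ℂ) with hsp
  -- the function of y
  set fY : ℂ → ℂ := fun y =>
    (∫ s in Ioi (0:ℝ), cexp (-((-x) + (s:ℂ) - y)^2) * cerfc (lam * ((-x) + (s:ℂ))))
      - (∫ s in Ioi (0:ℝ), cexp (-(x + (s:ℂ) - (-y))^2) * cerfc (lam * (x + (s:ℂ))))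
      - sp * cerfc (lam * y / μ) + sp * cerfc (x + y) with hfY
  -- derivative of fY is 0
  have hder : ∀ w : ℂ, HasDerivAt fY 0 w := by
    intro w
    set A := cexp (-(x+w)^2) with hA
    set E := cexp (-((lam*w)^2/(lam^2+1))) with hE
    set C := cerfc (μ*(x + w/(lam^2+1))) with hC
    -- first integral
    have h1 := (phi_hasDerivAt_y (-x) lam hl w).1
    have h1v : (∫ s in Ioi (0:ℝ),
        (2*((-x) + (s:ℂ) - w)) * (cexp (-((-x) + (s:ℂ) - w)^2) * cerfc (lam * ((-x) + (s:ℂ)))))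
        = A * (2 - cerfc (lam*x)) - (2*lam/sp) * (E * (μ⁻¹ * (sp/2) * (2 - C))) := by
      rw [phi_deriv_y_val (-x) w lam hl, gauss2_integral (-x) w lam hl]
      have e1 : cexp (-((-x) - w)^2) = A := by rw [hA]; congr 1; ring
      have e2 : cerfc (lam * (-x)) = 2 - cerfc (lam*x) := by
        have : lam * (-x) = -(lam*x) := by ring
        rw [this, cerfc_neg_eq]
      have e4 : cerfc (μ * ((-x) - w/(lam^2+1))) = 2 - C := by
        have : μ * ((-x) - w/(lam^2+1)) = -(μ*(x + w/(lam^2+1))) := by ring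
        rw [this, cerfc_neg_eq, hC]
      rw [e1, e2, e4, hμ, hE, hsp]
    rw [h1v] at h1
    -- second integral, composed with neg
    have h2a := (phi_hasDerivAt_y x lam hl (-w)).1
    have h2v : (∫ s in Ioi (0:ℝ),
        (2*(x + (s:ℂ) - (-w))) * (cexp (-(x + (s:ℂ) - (-w))^2) * cerfc (lam * (x + (s:ℂ)))))
        = A * cerfc (lam*x) - (2*lam/sp) * (E * (μ⁻¹ * (sp/2) * C)) := by
      rw [phi_deriv_y_val x (-w) lam hl, gauss2_integral x (-w) lam hl]
      have e6 : cexp (-(x - (-w))^2) = A := by rw [hA]; congr 1; ring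
      have e3 : cexp (-((lam*(-w))^2/(lam^2+1))) = E := by rw [hE]; congr 1; ring
      have e5 : cerfc (μ * (x - (-w)/(lam^2+1))) = C := by
        rw [hC]; congr 1; ring
      rw [e6, e3, e5, hμ, hsp]
    rw [h2v] at h2a
    have h2 := h2a.comp w (hasDerivAt_neg w)
    -- cerfc (lam*y/μ)
    have h3 : HasDerivAt (fun y : ℂ => cerfc (lam * y / μ))
        (-(2/sp) * E * (lam/μ)) w := by
      have hin : HasDerivAt (fun y : ℂ => lam * y / μ) (lam/μ) w := by
        have h0 := ((hasDerivAt_id w).const_mul lam).div_const μ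
        simpa using h0
      have hcomp := HasDerivAt.comp w (cerfc_hasDerivAt (lam*w/μ)) hin
      have e7 : cexp (-(lam*w/μ)^2) = E := by
        rw [hE]
        congr 1
        rw [div_pow, hμsq]
        try ring
      have e8 : -(2 / ((Real.sqrt Real.pi:ℝ):ℂ)) * cexp (-(lam*w/μ)^2) * (lam/μ)
          = -(2/sp) * E * (lam/μ) := by rw [e7, hsp]
      rw [← e8]
      exact hcomp
    -- cerfc (x+y)
    have h4 : HasDerivAt (fun y : ℂ => cerfc (x + y)) (-(2/sp) * A) w := by
      have hin : HasDerivAt (fun y : ℂ => x + y) 1 w := by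
        simpa using (hasDerivAt_id w).const_add x
      have hcomp := HasDerivAt.comp w (cerfc_hasDerivAt (x+w)) hin
      have e9 : -(2 / ((Real.sqrt Real.pi:ℝ):ℂ)) * cexp (-(x+w)^2) * 1 = -(2/sp) * A := by
        rw [hA, hsp]; ring
      rw [← e9]
      exact hcomp
    have htot := ((h1.sub h2).sub (h3.const_mul sp)).add (h4.const_mul sp)
    have hzero : A * (2 - cerfc (lam*x)) - (2*lam/sp) * (E * (μ⁻¹ * (sp/2) * (2 - C)))
        - (A * cerfc (lam*x) - (2*lam/sp) * (E * (μ⁻¹ * (sp/2) * C))) * (-1)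
        - sp * (-(2/sp) * E * (lam/μ)) + sp * (-(2/sp) * A) = 0 := by
      have hspne : sp ≠ 0 := sqrtpi_ne
      field_simp
      try ring
    rw [hzero] at htot
    exact htot
  -- fY is constant; evaluate at 0 using the x-lemma
  have hconst : fY y = fY 0 :=
    eq_of_deriv_eq (d := fun _ => 0) hder (fun z => hasDerivAt_const z (fY 0)) rfl y
  -- now the x-direction function
  set fX : ℂ → ℂ := fun x =>
    (∫ s in Ioi (0:ℝ), cexp (-((-x) + (s:ℂ))^2) * cerfc (lam * ((-x) + (s:ℂ))))
      - (∫ s in Ioi (0:ℝ), cexp (-(x + (s:ℂ))^2) * cerfc (lam * (x + (s:ℂ))))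
      + sp * cerfc x - sp with hfX
  have hderX : ∀ w : ℂ, HasDerivAt fX 0 w := by
    intro w
    have h1a := phi_hasDerivAt_x lam hl (-w)
    have h1 := h1a.comp w (hasDerivAt_neg w)
    have h2 := phi_hasDerivAt_x lam hl w
    have h3 := (cerfc_hasDerivAt w).const_mul sp
    have htot := ((h1.sub h2).add h3).sub_const sp
    have hzero : -(cexp (-(-w)^2) * cerfc (lam * (-w))) * (-1)
        - (-(cexp (-w^2) * cerfc (lam*w)))
        + sp * (-(2 / ((Real.sqrt Real.pi:ℝ):ℂ)) * cexp (-w^2)) = 0 := by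
      have e1 : cexp (-(-w)^2) = cexp (-w^2) := by congr 1; ring
      have e2 : cerfc (lam * (-w)) = 2 - cerfc (lam*w) := by
        have : lam * (-w) = -(lam*w) := by ring
        rw [this, cerfc_neg_eq]
      rw [e1, e2, hsp]
      have hspne : ((Real.sqrt Real.pi:ℝ):ℂ) ≠ 0 := sqrtpi_ne
      field_simp
      try ring
    rw [hzero] at htot
    exact htot
  have hconstX : fX x = fX 0 :=
    eq_of_deriv_eq (d := fun _ => 0) hderX (fun z => hasDerivAt_const z (fX 0)) rfl x
  have hfX0 : fX 0 = 0 := by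
    rw [hfX]
    simp only [neg_zero, zero_add, cerfc_zero', mul_one]
    ring
  -- fY 0 = fX x
  have hY0 : fY 0 = fX x := by
    simp only [hfY, hfX]
    have p1 : (∫ s in Ioi (0:ℝ), cexp (-((-x) + (s:ℂ) - 0)^2) * cerfc (lam * ((-x) + (s:ℂ))))
        = ∫ s in Ioi (0:ℝ), cexp (-((-x) + (s:ℂ))^2) * cerfc (lam * ((-x) + (s:ℂ))) := by
      refine setIntegral_congr_fun measurableSet_Ioi fun s _ => ?_
      rw [sub_zero]
    have p2 : (∫ s in Ioi (0:ℝ), cexp (-(x + (s:ℂ) - (-0:ℂ))^2) * cerfc (lam * (x + (s:ℂ))))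
        = ∫ s in Ioi (0:ℝ), cexp (-(x + (s:ℂ))^2) * cerfc (lam * (x + (s:ℂ))) := by
      refine setIntegral_congr_fun measurableSet_Ioi fun s _ => ?_
      rw [neg_zero, sub_zero]
    have p3 : cerfc (lam * 0 / μ) = 1 := by
      rw [mul_zero, zero_div, cerfc_zero']
    have p4 : cerfc (x + 0) = cerfc x := by rw [add_zero]
    rw [p1, p2, p3, p4]
    ring
  have hfin : fY y = 0 := by rw [hconst, hY0, hconstX, hfX0]
  simp only [hfY] at hfin
  exact hfin

theorem stmt17 (x y lam : ℂ) (hl : -1 < (lam ^ 2).re) :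
    (cerfc3 (-x) y lam =
      cerfc3 x (-y) lam + 2 * cerfc (lam * y / sqrtC (lam ^ 2 + 1)) -
        2 * cerfc (x + y)) ∧
    cerfc3 x y (-lam) = -cerfc3 x y lam + 2 * cerfc (x - y) := by
  have hsp2 : (2:ℂ)/((Real.sqrt Real.pi:ℝ):ℂ) * ((Real.sqrt Real.pi:ℝ):ℂ) = 2 := by
    rw [div_mul_cancel₀ _ sqrtpi_ne]
  constructor
  · have hY := fY_eq_zero x lam hl y
    rw [cerfc3, cerfc3]
    linear_combination (2/((Real.sqrt Real.pi:ℝ):ℂ)) * hY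
      + (cerfc (lam*y/sqrtC (lam^2+1)) - cerfc (x+y)) * hsp2
  · rw [cerfc3, cerfc3]
    have hint1 : IntegrableOn (fun s : ℝ => 2 * cexp (-(x + (s:ℂ) - y)^2)) (Ioi 0) := by
      apply Integrable.integrableOn
      apply ((integrable_cexp_shift' (x-y)).const_mul 2).congr
      filter_upwards with s
      congr 2
      ring
    have hint2 : IntegrableOn
        (fun s : ℝ => cexp (-(x + (s:ℂ) - y)^2) * cerfc (lam * (x + (s:ℂ)))) (Ioi 0) :=
      (integrable_main x y lam hl).integrableOn
    have hI : (∫ s in Ioi (0:ℝ), cexp (-(x + (s:ℂ) - y)^2) * cerfc ((-lam) * (x+(s:ℂ))))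
        = (∫ s in Ioi (0:ℝ), 2 * cexp (-(x + (s:ℂ) - y)^2))
          - ∫ s in Ioi (0:ℝ), cexp (-(x + (s:ℂ) - y)^2) * cerfc (lam * (x+(s:ℂ))) := by
      rw [← MeasureTheory.integral_sub hint1 hint2]
      refine setIntegral_congr_fun measurableSet_Ioi fun s _ => ?_
      have hneg : (-lam) * (x+(s:ℂ)) = -(lam * (x+(s:ℂ))) := by ring
      rw [hneg, cerfc_neg_eq]
      ring
    have hG : (∫ s in Ioi (0:ℝ), 2 * cexp (-(x + (s:ℂ) - y)^2))
        = ((Real.sqrt Real.pi:ℝ):ℂ) * cerfc (x - y) := by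
      rw [MeasureTheory.integral_const_mul]
      have hpsi := psi_eq (b:=1) (by norm_num) (x-y)
      rw [Complex.one_cpow] at hpsi
      have he : (∫ s in Ioi (0:ℝ), cexp (-(x + (s:ℂ) - y)^2))
          = ∫ t in Ioi (0:ℝ), cexp (-((1:ℂ)*((x-y)+(t:ℂ))^2)) := by
        refine setIntegral_congr_fun measurableSet_Ioi fun t _ => ?_
        congr 1
        ring
      rw [he, hpsi, inv_one, one_mul]
      ring
    rw [hI, hG]
    linear_combination (cerfc (x - y)) * hsp2
end
end
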